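/- arXiv:1509.06093 — 14 statements merged into one kernel-verified Lean document; each statement's English description precedes it below -/
import Mathlib

section
/- For all positive integers n, the chocolate number A(1,n) equals (n-1)!. -/
/-- For all positive integers n, the chocolate number A(1,n) equals (n-1)!. -/
theorem chocolate_one_row (A : ℕ → ℕ → ℕ)
    (hA11 : A 1 1 = 1)
    (hArec : ∀ m n : ℕ, 1 ≤ m → 1 ≤ n → 1 < m * n →
      A m n =
        (∑ i ∈ Finset.Icc 1 (m - 1),
            Nat.choose (m * n - 2) (i * n - 1) * A i n * A (m - i) n) +
        ∑ i ∈ Finset.Icc 1 (n - 1),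
            Nat.choose (m * n - 2) (i * m - 1) * A i m * A (n - i) m) :
    ∀ n : ℕ, 1 ≤ n → A 1 n = Nat.factorial (n - 1) := by
  have col : ∀ k, 1 ≤ k → A k 1 = Nat.factorial (k - 1) := by
    intro k
    induction k using Nat.strong_induction_on with
    | _ k ih =>
      intro hk
      rcases eq_or_lt_of_le hk with h1 | hk2
      · rw [← h1]; simpa using hA11
      · have hrec := hArec k 1 hk le_rfl (by omega)
        simp only [mul_one] at hrec
        rw [hrec]
        have hterm : ∀ i ∈ Finset.Icc 1 (k - 1),
            Nat.choose (k - 2) (i - 1) * A i 1 * A (k - i) 1 = Nat.factorial (k - 2) := by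
          intro i hi
          rw [Finset.mem_Icc] at hi
          rw [ih i (by omega) hi.1, ih (k - i) (by omega) (by omega)]
          have h1 : i - 1 ≤ k - 2 := by omega
          have h2 : k - 2 - (i - 1) = k - i - 1 := by omega
          rw [← h2]
          exact Nat.choose_mul_factorial_mul_factorial h1
        rw [Finset.sum_congr rfl hterm, Finset.sum_const, Nat.card_Icc, smul_eq_mul]
        have h3 : k - 1 = (k - 2) + 1 := by omega
        have hempty : ∑ i ∈ Finset.Icc 1 (1 - 1),
            Nat.choose (k - 2) (i * k - 1) * A i k * A (1 - i) k = 0 := by simp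
        rw [hempty, add_zero, h3, Nat.factorial_succ, Nat.add_sub_cancel]
  intro n hn
  rcases eq_or_lt_of_le hn with h1 | hn2
  · rw [← h1]; simpa using hA11
  · have hrec := hArec 1 n le_rfl hn (by omega)
    simp only [one_mul, mul_one, Nat.sub_self] at hrec
    rw [hrec]
    have hterm : ∀ i ∈ Finset.Icc 1 (n - 1),
        Nat.choose (n - 2) (i - 1) * A i 1 * A (n - i) 1 = Nat.factorial (n - 2) := by
      intro i hi
      rw [Finset.mem_Icc] at hi
      rw [col i hi.1, col (n - i) (by omega)]
      have h1 : i - 1 ≤ n - 2 := by omega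
      have h2 : n - 2 - (i - 1) = n - i - 1 := by omega
      rw [← h2]
      exact Nat.choose_mul_factorial_mul_factorial h1
    have hempty : ∑ i ∈ Finset.Icc 1 (1 - 1),
        Nat.choose (n - 2) (i * n - 1) * A i n * A (1 - i) n = 0 := by simp
    rw [hempty, zero_add, Finset.sum_congr rfl hterm, Finset.sum_const, Nat.card_Icc,
      smul_eq_mul]
    have h3 : n - 1 = (n - 2) + 1 := by omega
    rw [h3, Nat.factorial_succ, Nat.add_sub_cancel]
end

section
/- For all integers m, n > 1, the 2-adic valuation of A(m,n) is at least m + n - 2; that is, 2^{m+n-2} divides A(m,n). -/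
/-- For all integers m, n > 1, the 2-adic valuation of A(m,n) is at least
m + n - 2; that is, 2^(m+n-2) divides A(m,n). -/
theorem chocolate_two_adic (A : ℕ → ℕ → ℕ)
    (hA11 : A 1 1 = 1)
    (hArec : ∀ m n : ℕ, 1 ≤ m → 1 ≤ n → 1 < m * n →
      A m n =
        (∑ i ∈ Finset.Icc 1 (m - 1),
            Nat.choose (m * n - 2) (i * n - 1) * A i n * A (m - i) n) +
        ∑ i ∈ Finset.Icc 1 (n - 1),
            Nat.choose (m * n - 2) (i * m - 1) * A i m * A (n - i) m) :
    ∀ m n : ℕ, 1 < m → 1 < n → 2 ^ (m + n - 2) ∣ A m n := by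
  -- Values of A on the first column: A (k+1) 1 = k!
  have hAone : ∀ k : ℕ, A (k + 1) 1 = k.factorial := by
    intro k
    induction k using Nat.strong_induction_on with
    | _ k ih =>
      cases k with
      | zero => simpa using hA11
      | succ k =>
        rw [hArec (k + 2) 1 (by omega) le_rfl (by omega)]
        rw [Finset.Icc_eq_empty (a := 1) (b := (1:ℕ) - 1) (by norm_num),
          Finset.sum_empty, add_zero, show k + 2 - 1 = k + 1 by omega]
        have hterm : ∀ i ∈ Finset.Icc 1 (k + 1),
            Nat.choose ((k + 2) * 1 - 2) (i * 1 - 1) * A i 1 * A (k + 2 - i) 1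
              = k.factorial := by
          intro i hi
          rw [Finset.mem_Icc] at hi
          have h1 : A i 1 = (i - 1).factorial := by
            have := ih (i - 1) (by omega)
            rwa [show i - 1 + 1 = i by omega] at this
          have h2 : A (k + 2 - i) 1 = (k + 1 - i).factorial := by
            have := ih (k + 1 - i) (by omega)
            rwa [show k + 1 - i + 1 = k + 2 - i by omega] at this
          rw [h1, h2, show (k + 2) * 1 - 2 = k by omega,
            show i * 1 - 1 = i - 1 by omega]
          have := Nat.choose_mul_factorial_mul_factorial
            (show i - 1 ≤ k by omega)
          rwa [show k - (i - 1) = k + 1 - i by omega] at this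
        rw [Finset.sum_congr rfl hterm, Finset.sum_const, Nat.card_Icc,
          smul_eq_mul, show k + 1 + 1 - 1 = k + 1 by omega]
        exact (Nat.factorial_succ k).symm
  -- Values of A on the first row: A 1 (k+1) = k!
  have hA1 : ∀ k : ℕ, A 1 (k + 1) = k.factorial := by
    intro k
    cases k with
    | zero => simpa using hA11
    | succ k =>
      rw [hArec 1 (k + 2) le_rfl (by omega) (by omega)]
      rw [Finset.Icc_eq_empty (a := 1) (b := (1:ℕ) - 1) (by norm_num),
        Finset.sum_empty, zero_add, show k + 2 - 1 = k + 1 by omega]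
      have hterm : ∀ i ∈ Finset.Icc 1 (k + 1),
          Nat.choose (1 * (k + 2) - 2) (i * 1 - 1) * A i 1 * A (k + 2 - i) 1
            = k.factorial := by
        intro i hi
        rw [Finset.mem_Icc] at hi
        have h1 : A i 1 = (i - 1).factorial := by
          have := hAone (i - 1)
          rwa [show i - 1 + 1 = i by omega] at this
        have h2 : A (k + 2 - i) 1 = (k + 1 - i).factorial := by
          have := hAone (k + 1 - i)
          rwa [show k + 1 - i + 1 = k + 2 - i by omega] at this
        rw [h1, h2, show 1 * (k + 2) - 2 = k by omega,
          show i * 1 - 1 = i - 1 by omega]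
        have := Nat.choose_mul_factorial_mul_factorial
          (show i - 1 ≤ k by omega)
        rwa [show k - (i - 1) = k + 1 - i by omega] at this
      rw [Finset.sum_congr rfl hterm, Finset.sum_const, Nat.card_Icc,
        smul_eq_mul, show k + 1 + 1 - 1 = k + 1 by omega]
      exact (Nat.factorial_succ k).symm
  -- Elementary fact: 2^(k+1) ∣ (2k)! for k ≥ 2
  have hF : ∀ k : ℕ, 2 ≤ k → 2 ^ (k + 1) ∣ (2 * k).factorial := by
    intro k hk
    induction k, hk using Nat.le_induction with
    | base => decide
    | succ k hk ih =>
      rw [show 2 * (k + 1) = (2 * k + 1) + 1 by ring, Nat.factorial_succ,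
        Nat.factorial_succ]
      have h2 : (2:ℕ) ∣ 2 * k + 1 + 1 := ⟨k + 1, by ring⟩
      calc 2 ^ (k + 1 + 1) = 2 * 2 ^ (k + 1) := by ring
        _ ∣ (2 * k + 1 + 1) * ((2 * k + 1) * (2 * k).factorial) :=
            mul_dvd_mul h2 (ih.mul_left _)
  -- Divisibility of each of the two sums in the recursion
  have hsum : ∀ m n : ℕ, 2 ≤ m → 2 ≤ n → 5 ≤ m + n →
      (∀ m' n' : ℕ, m' + n' < m + n → 2 ≤ m' → 2 ≤ n' →
        2 ^ (m' + n' - 2) ∣ A m' n') →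
      2 ^ (m + n - 2) ∣
        ∑ i ∈ Finset.Icc 1 (m - 1),
          Nat.choose (m * n - 2) (i * n - 1) * A i n * A (m - i) n := by
    intro m n hm hn h5 ih
    apply Finset.dvd_sum
    intro i hi
    rw [Finset.mem_Icc] at hi
    obtain ⟨hi1, hi2⟩ := hi
    rcases eq_or_lt_of_le hi1 with h1 | h1
    · -- i = 1
      rw [← h1, one_mul, show m - 1 = m - 1 from rfl]
      by_cases hm2 : m = 2
      · -- m = 2, so n ≥ 3; the term equals (2n-2)!
        subst hm2
        have hn3 : 3 ≤ n := by omega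
        have hA1n : A 1 n = (n - 1).factorial := by
          have := hA1 (n - 1)
          rwa [show n - 1 + 1 = n by omega] at this
        rw [show (2:ℕ) - 1 = 1 from rfl, hA1n]
        have heq : Nat.choose (2 * n - 2) (n - 1) * (n - 1).factorial *
            (n - 1).factorial = (2 * n - 2).factorial := by
          have := Nat.choose_mul_factorial_mul_factorial
            (show n - 1 ≤ 2 * n - 2 by omega)
          rwa [show 2 * n - 2 - (n - 1) = n - 1 by omega] at this
        rw [heq]
        have := hF (n - 1) (by omega)
        rwa [show n - 1 + 1 = 2 + n - 2 by omega,
          show 2 * (n - 1) = 2 * n - 2 by omega] at this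
      · -- m ≥ 3
        have hm3 : 3 ≤ m := by omega
        have e2 : 2 ^ (m + n - 3) ∣ A (m - 1) n := by
          have := ih (m - 1) n (by omega) (by omega) hn
          rwa [show m - 1 + n - 2 = m + n - 3 by omega] at this
        have e1 : 2 ∣ Nat.choose (m * n - 2) (n - 1) * A 1 n := by
          by_cases hn2 : n = 2
          · subst hn2
            refine Dvd.dvd.mul_right ?_ _
            rw [show (2:ℕ) - 1 = 1 from rfl, Nat.choose_one_right]
            exact ⟨m - 1, by omega⟩
          · have hA1n : A 1 n = (n - 1).factorial := by
              have := hA1 (n - 1)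
              rwa [show n - 1 + 1 = n by omega] at this
            refine Dvd.dvd.mul_left ?_ _
            rw [hA1n]
            exact Nat.dvd_factorial (by norm_num) (by omega)
        calc 2 ^ (m + n - 2) = 2 * 2 ^ (m + n - 3) := by
              rw [← pow_succ']; congr 1; omega
          _ ∣ Nat.choose (m * n - 2) (n - 1) * A 1 n * A (m - 1) n :=
              mul_dvd_mul e1 e2
    · -- 2 ≤ i
      rcases eq_or_lt_of_le hi2 with h2 | h2
      · -- i = m - 1, with i ≥ 2 so m ≥ 3
        have hm3 : 3 ≤ m := by omega
        rw [h2, show m - (m - 1) = 1 by omega]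
        have e2 : 2 ^ (m + n - 3) ∣ A (m - 1) n := by
          have := ih (m - 1) n (by omega) (by omega) hn
          rwa [show m - 1 + n - 2 = m + n - 3 by omega] at this
        by_cases hn2 : n = 2
        · subst hn2
          have e1 : 2 ∣ Nat.choose (m * 2 - 2) ((m - 1) * 2 - 1) := by
            rw [show (m - 1) * 2 - 1 = m * 2 - 2 - 1 by omega,
              Nat.choose_symm (show 1 ≤ m * 2 - 2 by omega),
              Nat.choose_one_right]
            exact ⟨m - 1, by omega⟩
          calc 2 ^ (m + 2 - 2) = 2 * 2 ^ (m + 2 - 3) := by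
                rw [← pow_succ']; congr 1; omega
            _ ∣ Nat.choose (m * 2 - 2) ((m - 1) * 2 - 1) * A (m - 1) 2 :=
                mul_dvd_mul e1 e2
            _ ∣ Nat.choose (m * 2 - 2) ((m - 1) * 2 - 1) * A (m - 1) 2 *
                A 1 2 := Dvd.dvd.mul_right dvd_rfl _
        · have hn3 : 3 ≤ n := by omega
          have hA1n : A 1 n = (n - 1).factorial := by
            have := hA1 (n - 1)
            rwa [show n - 1 + 1 = n by omega] at this
          have e1 : 2 ∣ A 1 n := by
            rw [hA1n]; exact Nat.dvd_factorial (by norm_num) (by omega)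
          calc 2 ^ (m + n - 2) = 2 ^ (m + n - 3) * 2 := by
                rw [← pow_succ]; congr 1; omega
            _ ∣ Nat.choose (m * n - 2) ((m - 1) * n - 1) * A (m - 1) n *
                A 1 n := mul_dvd_mul (e2.mul_left _) e1
      · -- 2 ≤ i ≤ m - 2
        have e1 : 2 ^ (i + n - 2) ∣ A i n :=
          ih i n (by omega) (by omega) hn
        have e2 : 2 ^ (m - i + n - 2) ∣ A (m - i) n :=
          ih (m - i) n (by omega) (by omega) hn
        calc 2 ^ (m + n - 2)
            ∣ 2 ^ ((i + n - 2) + (m - i + n - 2)) := pow_dvd_pow 2 (by omega)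
          _ = 2 ^ (i + n - 2) * 2 ^ (m - i + n - 2) := pow_add 2 _ _
          _ ∣ A i n * A (m - i) n := mul_dvd_mul e1 e2
          _ ∣ Nat.choose (m * n - 2) (i * n - 1) * A i n * A (m - i) n := by
              rw [mul_assoc]; exact dvd_mul_left _ _
  -- Main claim by strong induction on m + n
  have key : ∀ s m n : ℕ, m + n ≤ s → 2 ≤ m → 2 ≤ n →
      2 ^ (m + n - 2) ∣ A m n := by
    intro s
    induction s with
    | zero => intro m n h hm hn; omega
    | succ s ih =>
      intro m n hle hm hn
      by_cases h4 : m + n = 4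
      · have hm2 : m = 2 := by omega
        have hn2 : n = 2 := by omega
        subst hm2; subst hn2
        rw [hArec 2 2 (by norm_num) (by norm_num) (by norm_num)]
        have h12 : A 1 2 = 1 := by simpa using hA1 1
        norm_num [h12]
      · have ihs : ∀ m' n' : ℕ, m' + n' < m + n → 2 ≤ m' → 2 ≤ n' →
            2 ^ (m' + n' - 2) ∣ A m' n' := fun m' n' h hm' hn' =>
          ih m' n' (by omega) hm' hn'
        rw [hArec m n (by omega) (by omega) (by nlinarith)]
        refine dvd_add (hsum m n hm hn (by omega) ihs) ?_
        have := hsum n m hn hm (by omega) (fun m' n' h hm' hn' =>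
          ihs m' n' (by omega) hm' hn')
        rwa [Nat.mul_comm n m, Nat.add_comm n m] at this
  intro m n hm hn
  exact key (m + n) m n le_rfl hm hn
end

section
/- For all integers n > 1, 2^n divides A(2,n). -/
/-- For all integers n > 1, 2^n divides A(2,n). -/
theorem chocolate2_two_adic (A : ℕ → ℕ → ℕ)
    (hA11 : A 1 1 = 1)
    (hArec : ∀ m n : ℕ, 1 ≤ m → 1 ≤ n → 1 < m * n →
      A m n =
        (∑ i ∈ Finset.Icc 1 (m - 1),
            Nat.choose (m * n - 2) (i * n - 1) * A i n * A (m - i) n) +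
        ∑ i ∈ Finset.Icc 1 (n - 1),
            Nat.choose (m * n - 2) (i * m - 1) * A i m * A (n - i) m) :
    ∀ n : ℕ, 1 < n → 2 ^ n ∣ A 2 n := by
  -- Step 1: A n 1 = A 1 n = (n-1)!
  have hfac : ∀ n : ℕ, 1 ≤ n →
      A n 1 = Nat.factorial (n - 1) ∧ A 1 n = Nat.factorial (n - 1) := by
    intro n
    induction n using Nat.strong_induction_on with
    | _ n ih =>
      intro hn
      rcases eq_or_lt_of_le hn with h1 | h1
      · rw [← h1]; simp [hA11]
      · have hsum : (∑ i ∈ Finset.Icc 1 (n - 1),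
            Nat.choose (n - 2) (i * 1 - 1) * A i 1 * A (n - i) 1)
            = Nat.factorial (n - 1) := by
          have hconst : ∀ i ∈ Finset.Icc 1 (n - 1),
              Nat.choose (n - 2) (i * 1 - 1) * A i 1 * A (n - i) 1
                = Nat.factorial (n - 2) := by
            intro i hi
            simp only [Finset.mem_Icc] at hi
            have hAi : A i 1 = Nat.factorial (i - 1) := (ih i (by omega) (by omega)).1
            have hAni : A (n - i) 1 = Nat.factorial (n - i - 1) :=
              (ih (n - i) (by omega) (by omega)).1
            rw [hAi, hAni, mul_one]
            have h2 : n - i - 1 = (n - 2) - (i - 1) := by omega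
            rw [h2]
            exact Nat.choose_mul_factorial_mul_factorial (by omega)
          rw [Finset.sum_congr rfl hconst, Finset.sum_const, Nat.card_Icc, smul_eq_mul]
          have h4 : n - 1 + 1 - 1 = n - 1 := by omega
          rw [h4]
          calc (n - 1) * Nat.factorial (n - 2)
              = (n - 1) * Nat.factorial (n - 1 - 1) := by
                rw [show n - 1 - 1 = n - 2 by omega]
            _ = Nat.factorial (n - 1) := Nat.mul_factorial_pred (by omega)
        constructor
        · have e := hArec n 1 (by omega) (by omega) (by omega)
          simp only [mul_one, Nat.sub_self] at e
          rw [e]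
          rw [show Finset.Icc 1 0 = (∅ : Finset ℕ) from Finset.Icc_eq_empty (by omega)]
          simpa using hsum
        · have e := hArec 1 n (by omega) (by omega) (by omega)
          simp only [one_mul, mul_one, Nat.sub_self] at e
          rw [e]
          rw [show Finset.Icc 1 0 = (∅ : Finset ℕ) from Finset.Icc_eq_empty (by omega)]
          simpa using hsum
  -- Step 2: symmetry A 2 n = A n 2 for n ≥ 2
  have hsym : ∀ n : ℕ, 2 ≤ n → A 2 n = A n 2 := by
    intro n hn
    have e1 := hArec 2 n (by omega) (by omega) (by omega)
    have e2 := hArec n 2 (by omega) (by omega) (by omega)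
    rw [Nat.mul_comm n 2] at e2
    rw [e1, e2, Nat.add_comm]
  -- Step 3: 2^k ∣ (2k-2)! for k ≥ 3
  have hfact2 : ∀ k : ℕ, 3 ≤ k → (2:ℕ) ^ k ∣ Nat.factorial (2 * k - 2) := by
    intro k hk
    induction k, hk using Nat.le_induction with
    | base => decide
    | succ k hk ih =>
      have h1 : 2 * (k + 1) - 2 = 2 * k := by omega
      rw [h1]
      have h2 : (2 * k) * Nat.factorial (2 * k - 1) = Nat.factorial (2 * k) :=
        Nat.mul_factorial_pred (by omega)
      have h3 : (2 * k - 1) * Nat.factorial (2 * k - 1 - 1) = Nat.factorial (2 * k - 1) :=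
        Nat.mul_factorial_pred (by omega)
      rw [← h2, ← h3, show 2 * k - 1 - 1 = 2 * k - 2 by omega, pow_succ]
      calc (2:ℕ) ^ k * 2 = 2 * 2 ^ k := by ring
        _ ∣ (2 * k) * ((2 * k - 1) * Nat.factorial (2 * k - 2)) :=
            mul_dvd_mul (Dvd.intro k rfl) (ih.mul_left _)
  -- Step 4: main induction: 2^n ∣ A n 2 for n ≥ 2
  have hmain : ∀ n : ℕ, 2 ≤ n → (2:ℕ) ^ n ∣ A n 2 := by
    intro n
    induction n using Nat.strong_induction_on with
    | _ n ih =>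
      intro hn
      have hA12 : A 1 2 = 1 := by simpa using (hfac 2 (by omega)).2
      rcases eq_or_lt_of_le hn with h2 | h2
      · -- n = 2
        have e := hArec 2 2 (by omega) (by omega) (by omega)
        rw [← h2, e]
        simp [hA12]
      · -- n ≥ 3
        have e := hArec n 2 (by omega) (by omega) (by omega)
        rw [e]
        apply dvd_add
        · -- sum over i ∈ Icc 1 (n-1)
          apply Finset.dvd_sum
          intro i hi
          simp only [Finset.mem_Icc] at hi
          rcases eq_or_lt_of_le hi.1 with hi1 | hi1
          · -- i = 1
            rw [← hi1, hA12, one_mul, mul_one]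
            have hd : (2:ℕ) ^ (n - 1) ∣ A (n - 1) 2 := ih (n - 1) (by omega) (by omega)
            have hch : Nat.choose (n * 2 - 2) (2 - 1) = n * 2 - 2 := by
              simp
            rw [hch]
            calc (2:ℕ) ^ n = 2 * 2 ^ (n - 1) := by
                  rw [← pow_succ']; congr 1; omega
              _ ∣ (n * 2 - 2) * A (n - 1) 2 :=
                  mul_dvd_mul ⟨n - 1, by omega⟩ hd
          · rcases eq_or_lt_of_le (Nat.le_of_lt_succ (by omega : i < (n-1) + 1)) with hi2 | hi2
            · -- i = n - 1
              rw [hi2, show n - (n - 1) = 1 by omega, hA12, mul_one]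
              have hd : (2:ℕ) ^ (n - 1) ∣ A (n - 1) 2 := ih (n - 1) (by omega) (by omega)
              have hch : Nat.choose (n * 2 - 2) ((n - 1) * 2 - 1) = n * 2 - 2 := by
                rw [show (n - 1) * 2 - 1 = (n * 2 - 2) - 1 by omega]
                rw [Nat.choose_symm (show 1 ≤ n * 2 - 2 by omega), Nat.choose_one_right]
              rw [hch]
              calc (2:ℕ) ^ n = 2 * 2 ^ (n - 1) := by
                    rw [← pow_succ']; congr 1; omega
                _ ∣ (n * 2 - 2) * A (n - 1) 2 :=
                    mul_dvd_mul ⟨n - 1, by omega⟩ hd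
            · -- 2 ≤ i ≤ n - 2
              have hd1 : (2:ℕ) ^ i ∣ A i 2 := ih i (by omega) (by omega)
              have hd2 : (2:ℕ) ^ (n - i) ∣ A (n - i) 2 := ih (n - i) (by omega) (by omega)
              rw [mul_assoc]
              calc (2:ℕ) ^ n = 2 ^ i * 2 ^ (n - i) := by
                    rw [← pow_add]; congr 1; omega
                _ ∣ A i 2 * A (n - i) 2 := mul_dvd_mul hd1 hd2
                _ ∣ _ := Dvd.intro_left _ rfl
        · -- second sum: single term = (2n-2)!
          rw [show Finset.Icc 1 (2 - 1) = {1} from by rfl, Finset.sum_singleton]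
          have hA1n : A 1 n = Nat.factorial (n - 1) := (hfac n (by omega)).2
          rw [one_mul, show (2:ℕ) - 1 = 1 from rfl, hA1n]
          have key : Nat.choose (n * 2 - 2) (n - 1) * Nat.factorial (n - 1) *
              Nat.factorial (n - 1) = Nat.factorial (n * 2 - 2) := by
            have := Nat.choose_mul_factorial_mul_factorial
              (show n - 1 ≤ n * 2 - 2 by omega) (n := n * 2 - 2)
            rw [show n * 2 - 2 - (n - 1) = n - 1 by omega] at this
            exact this
          rw [key]
          have := hfact2 n (by omega)
          rwa [show 2 * n - 2 = n * 2 - 2 by omega] at this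
  intro n hn
  rw [hsym n hn]
  exact hmain n hn
end

section
/- For all positive integers n, 2^{2n-2} divides A(n,n). -/
private def Fc (m n : ℕ) : ℕ := (m + n + 2 * min m n) / 2 - 2

private lemma Fc_key {m n i : ℕ} (hn : 1 ≤ n) (hi : 1 ≤ i) (him : i < m) :
    Fc m n ≤ Fc i n + Fc (m - i) n + 1 + (if m = n then 1 else 0) := by
  unfold Fc
  rcases eq_or_ne m n with h | h <;> simp only [h, if_pos, if_neg, reduceIte] <;> omega

private lemma Fc_comm (m n : ℕ) : Fc m n = Fc n m := by
  unfold Fc; omega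

private lemma Fc_diag (n : ℕ) : Fc n n = 2 * n - 2 := by
  unfold Fc; omega

private lemma sum_pair_dvd (t : ℕ → ℕ) (m K : ℕ)
    (hsym : ∀ i ∈ Finset.Icc 1 (m - 1), t (m - i) = t i)
    (h1 : ∀ i ∈ Finset.Icc 1 (m - 1), 2 ^ K ∣ 2 * t i)
    (h2 : ∀ i ∈ Finset.Icc 1 (m - 1), m = 2 * i → 2 ^ K ∣ t i) :
    2 ^ K ∣ ∑ i ∈ Finset.Icc 1 (m - 1), t i := by
  have hne : NeZero (2 ^ K) := ⟨by positivity⟩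
  rw [← ZMod.natCast_eq_zero_iff _ (2 ^ K), Nat.cast_sum]
  refine Finset.sum_involution (fun i _ => m - i) ?_ ?_ ?_ ?_
  · intro a ha
    rw [hsym a ha, ← Nat.cast_add, ← two_mul,
      ZMod.natCast_eq_zero_iff]
    exact h1 a ha
  · intro a ha hta
    simp only [Finset.mem_Icc] at ha
    intro hmaa
    apply hta
    rw [ZMod.natCast_eq_zero_iff]
    exact h2 a (by simp [Finset.mem_Icc]; omega) (by omega)
  · intro a ha
    simp only [Finset.mem_Icc] at ha ⊢
    omega
  · intro a ha
    simp only [Finset.mem_Icc] at ha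
    omega

private lemma sum_dvd (A : ℕ → ℕ → ℕ) (k : ℕ)
    (ih : ∀ a b : ℕ, 1 ≤ a → 1 ≤ b → a + b ≤ k → 2 ^ Fc a b ∣ A a b)
    (m n : ℕ) (hm : 1 ≤ m) (hn : 1 ≤ n) (hk : m + n ≤ k + 1) :
    2 ^ (Fc m n - (if m = n then 1 else 0)) ∣
      ∑ i ∈ Finset.Icc 1 (m - 1),
        Nat.choose (m * n - 2) (i * n - 1) * A i n * A (m - i) n := by
  apply sum_pair_dvd
  · -- symmetry of terms
    intro i hi
    simp only [Finset.mem_Icc] at hi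
    obtain ⟨hi1, hi2⟩ := hi
    have him : i < m := by omega
    have e1 : (m - i) * n + i * n = m * n := by
      rw [← Nat.add_mul]; rw [Nat.sub_add_cancel (le_of_lt him)]
    have e2 : 1 ≤ i * n := Nat.one_le_iff_ne_zero.2 (by positivity)
    have e3 : i * n + n ≤ m * n := by
      calc i * n + n = (i + 1) * n := by ring
        _ ≤ m * n := Nat.mul_le_mul_right n (by omega)
    have hidx : (m - i) * n - 1 = (m * n - 2) - (i * n - 1) := by omega
    have hle : i * n - 1 ≤ m * n - 2 := by omega
    rw [hidx, Nat.choose_symm hle, show m - (m - i) = i from by omega]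
    ring
  · -- each doubled term is divisible
    intro i hi
    simp only [Finset.mem_Icc] at hi
    obtain ⟨hi1, hi2⟩ := hi
    have him : i < m := by omega
    have hm2 : 2 ≤ m := by omega
    have d1 : 2 ^ Fc i n ∣ A i n := ih i n hi1 hn (by omega)
    have d2 : 2 ^ Fc (m - i) n ∣ A (m - i) n := ih (m - i) n (by omega) hn (by omega)
    have key := Fc_key hn hi1 him (n := n)
    have hexp : Fc m n - (if m = n then 1 else 0) ≤ 1 + Fc i n + Fc (m - i) n := by
      rcases eq_or_ne m n with h | h <;> simp only [h, if_pos, if_neg, reduceIte] at key ⊢ <;> omega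
    refine dvd_trans (pow_dvd_pow 2 hexp) ?_
    have : (2 : ℕ) ^ (1 + Fc i n + Fc (m - i) n) = 2 * 2 ^ Fc i n * 2 ^ Fc (m - i) n := by
      rw [pow_add, pow_add, pow_one]
    rw [this, show 2 * (Nat.choose (m * n - 2) (i * n - 1) * A i n * A (m - i) n)
        = 2 * (Nat.choose (m * n - 2) (i * n - 1) * A i n) * A (m - i) n from by ring]
    exact mul_dvd_mul (mul_dvd_mul_left 2 (d1.mul_left _)) d2
  · -- middle term
    intro i hi hm2i
    simp only [Finset.mem_Icc] at hi
    obtain ⟨hi1, hi2⟩ := hi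
    have him : i < m := by omega
    have hmi : m - i = i := by omega
    by_cases hin : i * n = 1
    · have hi1' : i = 1 ∧ n = 1 := by
        constructor
        · exact Nat.eq_one_of_mul_eq_one_right hin
        · exact Nat.eq_one_of_mul_eq_one_left hin
      obtain ⟨rfl, rfl⟩ := hi1'
      have : m = 2 := by omega
      subst this
      norm_num [Fc]
    · have hin2 : 2 ≤ i * n := by
        have : 1 ≤ i * n := Nat.one_le_iff_ne_zero.2 (by positivity)
        omega
      have hmn2 : m * n - 2 = 2 * (i * n - 1) := by
        have : m * n = 2 * (i * n) := by rw [hm2i]; ring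
        omega
      have hcent : 2 ∣ Nat.choose (m * n - 2) (i * n - 1) := by
        rw [hmn2]
        have := Nat.two_dvd_centralBinom_of_one_le (n := i * n - 1) (by omega)
        rwa [Nat.centralBinom] at this
      have d1 : 2 ^ Fc i n ∣ A i n := ih i n hi1 hn (by omega)
      have key := Fc_key hn hi1 him (n := n)
      rw [hmi] at key
      have hexp : Fc m n - (if m = n then 1 else 0) ≤ 1 + Fc i n + Fc i n := by
        rcases eq_or_ne m n with h | h <;>
          simp only [h, if_pos, if_neg, reduceIte] at key ⊢ <;> omega
      refine dvd_trans (pow_dvd_pow 2 hexp) ?_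
      have : (2 : ℕ) ^ (1 + Fc i n + Fc i n) = 2 * 2 ^ Fc i n * 2 ^ Fc i n := by
        rw [pow_add, pow_add, pow_one]
      rw [this, hmi]
      exact mul_dvd_mul (mul_dvd_mul hcent d1) d1

private lemma chocolate_invariant (A : ℕ → ℕ → ℕ)
    (hA11 : A 1 1 = 1)
    (hArec : ∀ m n : ℕ, 1 ≤ m → 1 ≤ n → 1 < m * n →
      A m n =
        (∑ i ∈ Finset.Icc 1 (m - 1),
            Nat.choose (m * n - 2) (i * n - 1) * A i n * A (m - i) n) +
        ∑ i ∈ Finset.Icc 1 (n - 1),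
            Nat.choose (m * n - 2) (i * m - 1) * A i m * A (n - i) m) :
    ∀ k m n : ℕ, m + n ≤ k → 1 ≤ m → 1 ≤ n → 2 ^ Fc m n ∣ A m n := by
  intro k
  induction k with
  | zero => intro m n h hm hn; omega
  | succ k ihk =>
    intro m n hk hm hn
    by_cases hmn1 : m * n = 1
    · obtain ⟨rfl, rfl⟩ : m = 1 ∧ n = 1 :=
        ⟨Nat.eq_one_of_mul_eq_one_right hmn1, Nat.eq_one_of_mul_eq_one_left hmn1⟩
      simp [Fc, hA11]
    · have h2 : 1 < m * n := by
        have : 1 ≤ m * n := Nat.one_le_iff_ne_zero.2 (by positivity)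
        omega
      rw [hArec m n hm hn h2]
      have ih : ∀ a b : ℕ, 1 ≤ a → 1 ≤ b → a + b ≤ k → 2 ^ Fc a b ∣ A a b :=
        fun a b ha hb hab => ihk a b hab ha hb
      have HS1 := sum_dvd A k ih m n hm hn hk
      have HS2 := sum_dvd A k ih n m hn hm (by omega)
      rcases eq_or_ne m n with h | h
      · subst h
        rw [← two_mul]
        simp only [if_pos rfl] at HS1
        have hF : 1 ≤ Fc m m := by
          rw [Fc_diag]
          have : 2 ≤ m := by nlinarith
          omega
        calc (2 : ℕ) ^ Fc m m = 2 * 2 ^ (Fc m m - 1) := by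
              rw [← pow_succ']; congr 1; omega
          _ ∣ 2 * ∑ i ∈ Finset.Icc 1 (m - 1),
                Nat.choose (m * m - 2) (i * m - 1) * A i m * A (m - i) m :=
              mul_dvd_mul_left 2 HS1
      · simp only [if_neg h, if_neg (Ne.symm h), Nat.sub_zero] at HS1 HS2
        rw [Fc_comm n m, mul_comm n m] at HS2
        exact dvd_add HS1 HS2

/-- For all positive integers n, 2^(2n-2) divides A(n,n). -/
theorem chocolate_square_two_adic (A : ℕ → ℕ → ℕ)
    (hA11 : A 1 1 = 1)
    (hArec : ∀ m n : ℕ, 1 ≤ m → 1 ≤ n → 1 < m * n →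
      A m n =
        (∑ i ∈ Finset.Icc 1 (m - 1),
            Nat.choose (m * n - 2) (i * n - 1) * A i n * A (m - i) n) +
        ∑ i ∈ Finset.Icc 1 (n - 1),
            Nat.choose (m * n - 2) (i * m - 1) * A i m * A (n - i) m) :
    ∀ n : ℕ, 1 ≤ n → 2 ^ (2 * n - 2) ∣ A n n := by
  intro n hn
  have := chocolate_invariant A hA11 hArec (n + n) n n le_rfl hn hn
  rwa [Fc_diag] at this
end

section
/- For every positive integer n, A(2,n) = (2n-2)! + Σ_{m=1}^{n-1} C(2n-2, 2m-1)·A(2,m)·A(2,n-m). -/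
/-- For every positive integer n,
A(2,n) = (2n-2)! + Σ_{m=1}^{n-1} C(2n-2, 2m-1)·A(2,m)·A(2,n-m). -/
theorem chocolate2_recursion (A : ℕ → ℕ → ℕ)
    (hA11 : A 1 1 = 1)
    (hArec : ∀ m n : ℕ, 1 ≤ m → 1 ≤ n → 1 < m * n →
      A m n =
        (∑ i ∈ Finset.Icc 1 (m - 1),
            Nat.choose (m * n - 2) (i * n - 1) * A i n * A (m - i) n) +
        ∑ i ∈ Finset.Icc 1 (n - 1),
            Nat.choose (m * n - 2) (i * m - 1) * A i m * A (n - i) m) :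
    ∀ n : ℕ, 1 ≤ n →
      A 2 n = Nat.factorial (2 * n - 2) +
        ∑ m ∈ Finset.Icc 1 (n - 1),
          Nat.choose (2 * n - 2) (2 * m - 1) * A 2 m * A 2 (n - m) := by
  -- Symmetry of A
  have sym : ∀ m n : ℕ, 1 ≤ m → 1 ≤ n → A m n = A n m := by
    intro m n hm hn
    rcases Nat.lt_or_ge 1 (m * n) with h | h
    · rw [hArec m n hm hn h, hArec n m hn hm (by rwa [Nat.mul_comm])]
      rw [Nat.mul_comm n m]
      exact Nat.add_comm _ _
    · have hm1 : m = 1 := by nlinarith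
      have hn1 : n = 1 := by nlinarith
      subst hm1; subst hn1; rfl
  -- A 1 n = (n-1)!
  have A1 : ∀ n : ℕ, 1 ≤ n → A 1 n = Nat.factorial (n - 1) := by
    intro n
    induction n using Nat.strong_induction_on with
    | _ n ih =>
      intro hn
      rcases eq_or_lt_of_le hn with h | h
      · rw [← h]; simpa using hA11
      · rw [hArec 1 n le_rfl hn (by omega)]
        have key : ∀ i ∈ Finset.Icc 1 (n - 1),
            Nat.choose (1 * n - 2) (i * 1 - 1) * A i 1 * A (n - i) 1
              = Nat.factorial (n - 2) := by
          intro i hi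
          simp only [Finset.mem_Icc] at hi
          have h1 : A i 1 = Nat.factorial (i - 1) := by
            rw [sym i 1 hi.1 le_rfl]; exact ih i (by omega) hi.1
          have h2 : A (n - i) 1 = Nat.factorial (n - i - 1) := by
            rw [sym (n - i) 1 (by omega) le_rfl]
            exact ih (n - i) (by omega) (by omega)
          rw [h1, h2]
          have hb := Nat.choose_mul_factorial_mul_factorial
            (show i - 1 ≤ n - 2 by omega)
          rw [show n - 2 - (i - 1) = n - i - 1 by omega] at hb
          rw [show i * 1 - 1 = i - 1 by omega, show 1 * n - 2 = n - 2 by omega]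
          exact hb
        rw [show (1 : ℕ) - 1 = 0 from rfl,
          show Finset.Icc 1 0 = (∅ : Finset ℕ) from rfl, Finset.sum_empty,
          zero_add, Finset.sum_congr rfl key, Finset.sum_const, Nat.card_Icc,
          smul_eq_mul]
        rw [show n - 1 + 1 - 1 = n - 1 by omega]
        rw [show n - 1 = (n - 2) + 1 by omega, Nat.factorial_succ]
  intro n hn
  rcases eq_or_lt_of_le hn with h | h
  · rw [← h]
    simp [sym 2 1 (by norm_num) le_rfl, A1 2 (by norm_num)]
  · rw [hArec 2 n (by norm_num) hn (by omega)]
    have e1 : ∑ i ∈ Finset.Icc 1 (2 - 1),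
        Nat.choose (2 * n - 2) (i * n - 1) * A i n * A (2 - i) n
        = Nat.factorial (2 * n - 2) := by
      rw [show (2 : ℕ) - 1 = 1 from rfl, Finset.Icc_self, Finset.sum_singleton]
      rw [show (2 : ℕ) - 1 = 1 from rfl, one_mul, A1 n hn]
      have hb := Nat.choose_mul_factorial_mul_factorial
        (show n - 1 ≤ 2 * n - 2 by omega)
      rw [show 2 * n - 2 - (n - 1) = n - 1 by omega] at hb
      exact hb
    rw [e1]
    congr 1
    refine Finset.sum_congr rfl fun i hi => ?_
    simp only [Finset.mem_Icc] at hi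
    rw [show i * 2 = 2 * i by ring, sym i 2 hi.1 (by norm_num),
      sym (n - i) 2 (by omega) (by norm_num)]
end

section
/- Let n and k be positive integers. If k divides B(i) for every integer i with ⌊(n+1)/2⌋ ≤ i ≤ n-1, and k divides (2n-2)!, then k divides B(j) for every integer j ≥ n. -/
/-- Let n and k be positive integers. If k divides B(i) for every integer i
with ⌊(n+1)/2⌋ ≤ i ≤ n-1, and k divides (2n-2)!, then k divides B(j) for every j ≥ n. -/
theorem chocolate2_div_propagates (B : ℕ → ℕ)
    (hB1 : B 1 = 1)
    (hBrec : ∀ n : ℕ, 2 ≤ n →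
      B n = Nat.factorial (2 * n - 2) +
        ∑ m ∈ Finset.Icc 1 (n - 1),
          Nat.choose (2 * n - 2) (2 * m - 1) * B m * B (n - m)) :
    ∀ n k : ℕ, 1 ≤ n → 1 ≤ k →
      (∀ i : ℕ, (n + 1) / 2 ≤ i → i ≤ n - 1 → k ∣ B i) →
      k ∣ Nat.factorial (2 * n - 2) →
      ∀ j : ℕ, n ≤ j → k ∣ B j := by
  intro n k hn hk hdiv hfac
  rcases eq_or_lt_of_le hn with h1 | h2
  · -- n = 1 : then (2n-2)! = 1 so k = 1
    have hfac1 : k ∣ 1 := by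
      have : (2 * n - 2) = 0 := by omega
      rwa [this] at hfac
    have hk1 : k = 1 := Nat.dvd_one.mp hfac1
    intro j _
    simp [hk1]
  · -- n ≥ 2
    have main : ∀ j, n ≤ j → k ∣ B j := by
      intro j
      induction j using Nat.strong_induction_on with
      | _ j ih =>
        intro hj
        have hj2 : 2 ≤ j := by omega
        have key : ∀ t, (n + 1) / 2 ≤ t → t ≤ j - 1 → k ∣ B t := by
          intro t ht1 ht2
          rcases le_or_gt t (n - 1) with h | h
          · exact hdiv t ht1 h
          · exact ih t (by omega) (by omega)
        rw [hBrec j hj2]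
        apply Nat.dvd_add
        · exact hfac.trans (Nat.factorial_dvd_factorial (by omega))
        · apply Finset.dvd_sum
          intro m hm
          rw [Finset.mem_Icc] at hm
          obtain ⟨hm1, hm2⟩ := hm
          rcases le_total m (j - m) with h | h
          · exact ((key (j - m) (by omega) (by omega)).mul_left _)
          · exact ((key m (by omega) (by omega)).mul_left _).mul_right _
    exact main
end

section
/- For every integer i ≥ 6, 11 divides B(i). -/
/-- For every integer i ≥ 6, 11 divides B(i). -/
theorem chocolate2_div_eleven (B : ℕ → ℕ)
    (hB1 : B 1 = 1)
    (hBrec : ∀ n : ℕ, 2 ≤ n →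
      B n = Nat.factorial (2 * n - 2) +
        ∑ m ∈ Finset.Icc 1 (n - 1),
          Nat.choose (2 * n - 2) (2 * m - 1) * B m * B (n - m)) :
    ∀ i : ℕ, 6 ≤ i → 11 ∣ B i := by
  intro i
  induction i using Nat.strong_induction_on with
  | _ i ih =>
  intro hi
  have hB2 : B 2 = 4 := by
    rw [hBrec 2 (by norm_num), show Finset.Icc 1 1 = ({1} : Finset ℕ) from by decide]
    norm_num [hB1, Nat.factorial] <;> decide
  have hB3 : B 3 = 56 := by
    rw [hBrec 3 (by norm_num), show Finset.Icc 1 2 = ({1,2} : Finset ℕ) from by decide]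
    norm_num [Nat.factorial, hB1, hB2, Nat.factorial] <;> decide
  have hB4 : B 4 = 1712 := by
    rw [hBrec 4 (by norm_num), show Finset.Icc 1 3 = ({1,2,3} : Finset ℕ) from by decide]
    norm_num [Nat.factorial, hB1, hB2, hB3, Nat.factorial] <;> decide
  have hB5 : B 5 = 92800 := by
    rw [hBrec 5 (by norm_num), show Finset.Icc 1 4 = ({1,2,3,4} : Finset ℕ) from by decide]
    norm_num [Nat.factorial, hB1, hB2, hB3, hB4, Nat.factorial] <;> decide
  have hB6 : B 6 = 7918592 := by
    rw [hBrec 6 (by norm_num), show Finset.Icc 1 5 = ({1,2,3,4,5} : Finset ℕ) from by decide]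
    norm_num [Nat.factorial, hB1, hB2, hB3, hB4, hB5, Nat.factorial] <;> decide
  have hB7 : B 7 = 984237056 := by
    rw [hBrec 7 (by norm_num), show Finset.Icc 1 6 = ({1,2,3,4,5,6} : Finset ℕ) from by decide]
    norm_num [Nat.factorial, hB1, hB2, hB3, hB4, hB5, hB6, Nat.factorial] <;> decide
  have hB8 : B 8 = 168662855680 := by
    rw [hBrec 8 (by norm_num), show Finset.Icc 1 7 = ({1,2,3,4,5,6,7} : Finset ℕ) from by decide]
    norm_num [Nat.factorial, hB1, hB2, hB3, hB4, hB5, hB6, hB7, Nat.factorial] <;> decide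
  have hB9 : B 9 = 38238313152512 := by
    rw [hBrec 9 (by norm_num), show Finset.Icc 1 8 = ({1,2,3,4,5,6,7,8} : Finset ℕ) from by decide]
    norm_num [Nat.factorial, hB1, hB2, hB3, hB4, hB5, hB6, hB7, hB8, Nat.factorial] <;> decide
  have hB10 : B 10 = 11106033743298560 := by
    rw [hBrec 10 (by norm_num), show Finset.Icc 1 9 = ({1,2,3,4,5,6,7,8,9} : Finset ℕ) from by decide]
    norm_num [Nat.factorial, hB1, hB2, hB3, hB4, hB5, hB6, hB7, hB8, hB9, Nat.factorial] <;> decide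
  have hB11 : B 11 = 4026844843819663360 := by
    rw [hBrec 11 (by norm_num), show Finset.Icc 1 10 = ({1,2,3,4,5,6,7,8,9,10} : Finset ℕ) from by decide]
    norm_num [Nat.factorial, hB1, hB2, hB3, hB4, hB5, hB6, hB7, hB8, hB9, hB10, Nat.factorial] <;> decide
  by_cases h11 : i ≤ 11
  · interval_cases i <;>
      simp [hB6, hB7, hB8, hB9, hB10, hB11] <;> norm_num
  · push_neg at h11
    rw [hBrec i (by omega)]
    apply dvd_add
    · exact Nat.dvd_factorial (by norm_num) (by omega)
    · apply Finset.dvd_sum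
      intro m hm
      simp only [Finset.mem_Icc] at hm
      by_cases hm6 : 6 ≤ m
      · exact Dvd.dvd.mul_right (Dvd.dvd.mul_left (ih m (by omega) hm6) _) _
      · exact Dvd.dvd.mul_left (ih (i - m) (by omega) (by omega)) _
end

section
/- For every integer i ≥ 13, 5 divides B(i). -/
set_option maxHeartbeats 2000000 in
/-- For every integer i ≥ 13, 5 divides B(i). -/
theorem chocolate2_div_five (B : ℕ → ℕ)
    (hB1 : B 1 = 1)
    (hBrec : ∀ n : ℕ, 2 ≤ n →
      B n = Nat.factorial (2 * n - 2) +
        ∑ m ∈ Finset.Icc 1 (n - 1),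
          Nat.choose (2 * n - 2) (2 * m - 1) * B m * B (n - m)) :
    ∀ i : ℕ, 13 ≤ i → 5 ∣ B i := by
  have h1 : (B 1 : ZMod 5) = 1 := by rw [hB1]; norm_num
  have h2 : (B 2 : ZMod 5) = 4 := by
    have e := hBrec 2 (by norm_num)
    norm_num [Finset.sum_Icc_succ_top, Finset.Icc_self, Finset.sum_singleton] at e
    rw [e]; push_cast; rw [h1]; decide
  have h3 : (B 3 : ZMod 5) = 1 := by
    have e := hBrec 3 (by norm_num)
    norm_num [Finset.sum_Icc_succ_top, Finset.Icc_self, Finset.sum_singleton] at e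
    rw [e]; push_cast; rw [h1, h2]; decide
  have h4 : (B 4 : ZMod 5) = 2 := by
    have e := hBrec 4 (by norm_num)
    norm_num [Finset.sum_Icc_succ_top, Finset.Icc_self, Finset.sum_singleton] at e
    rw [e]; push_cast; rw [h1, h2, h3]; decide
  have h5 : (B 5 : ZMod 5) = 0 := by
    have e := hBrec 5 (by norm_num)
    norm_num [Finset.sum_Icc_succ_top, Finset.Icc_self, Finset.sum_singleton] at e
    rw [e]; push_cast; rw [h1, h2, h3, h4]; decide
  have h6 : (B 6 : ZMod 5) = 2 := by
    have e := hBrec 6 (by norm_num)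
    norm_num [Finset.sum_Icc_succ_top, Finset.Icc_self, Finset.sum_singleton] at e
    rw [e]; push_cast; rw [h1, h2, h3, h4, h5]; decide
  have h7 : (B 7 : ZMod 5) = 1 := by
    have e := hBrec 7 (by norm_num)
    norm_num [Finset.sum_Icc_succ_top, Finset.Icc_self, Finset.sum_singleton] at e
    rw [e]; push_cast; rw [h1, h2, h3, h4, h5, h6]; decide
  have h8 : (B 8 : ZMod 5) = 0 := by
    have e := hBrec 8 (by norm_num)
    norm_num [Finset.sum_Icc_succ_top, Finset.Icc_self, Finset.sum_singleton] at e
    rw [e]; push_cast; rw [h1, h2, h3, h4, h5, h6, h7]; decide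
  have h9 : (B 9 : ZMod 5) = 2 := by
    have e := hBrec 9 (by norm_num)
    norm_num [Finset.sum_Icc_succ_top, Finset.Icc_self, Finset.sum_singleton] at e
    rw [e]; push_cast; rw [h1, h2, h3, h4, h5, h6, h7, h8]; decide
  have h10 : (B 10 : ZMod 5) = 0 := by
    have e := hBrec 10 (by norm_num)
    norm_num [Finset.sum_Icc_succ_top, Finset.Icc_self, Finset.sum_singleton] at e
    rw [e]; push_cast; rw [h1, h2, h3, h4, h5, h6, h7, h8, h9]; decide
  have h11 : (B 11 : ZMod 5) = 0 := by
    have e := hBrec 11 (by norm_num)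
    norm_num [Finset.sum_Icc_succ_top, Finset.Icc_self, Finset.sum_singleton] at e
    rw [e]; push_cast; rw [h1, h2, h3, h4, h5, h6, h7, h8, h9, h10]; decide
  have h12 : (B 12 : ZMod 5) = 4 := by
    have e := hBrec 12 (by norm_num)
    norm_num [Finset.sum_Icc_succ_top, Finset.Icc_self, Finset.sum_singleton] at e
    rw [e]; push_cast; rw [h1, h2, h3, h4, h5, h6, h7, h8, h9, h10, h11]; decide
  have h13 : (B 13 : ZMod 5) = 0 := by
    have e := hBrec 13 (by norm_num)
    norm_num [Finset.sum_Icc_succ_top, Finset.Icc_self, Finset.sum_singleton] at e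
    rw [e]; push_cast; rw [h1, h2, h3, h4, h5, h6, h7, h8, h9, h10, h11, h12]; decide
  have h14 : (B 14 : ZMod 5) = 0 := by
    have e := hBrec 14 (by norm_num)
    norm_num [Finset.sum_Icc_succ_top, Finset.Icc_self, Finset.sum_singleton] at e
    rw [e]; push_cast; rw [h1, h2, h3, h4, h5, h6, h7, h8, h9, h10, h11, h12, h13]; decide
  have h15 : (B 15 : ZMod 5) = 0 := by
    have e := hBrec 15 (by norm_num)
    norm_num [Finset.sum_Icc_succ_top, Finset.Icc_self, Finset.sum_singleton] at e
    rw [e]; push_cast; rw [h1, h2, h3, h4, h5, h6, h7, h8, h9, h10, h11, h12, h13, h14]; decide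
  have h16 : (B 16 : ZMod 5) = 0 := by
    have e := hBrec 16 (by norm_num)
    norm_num [Finset.sum_Icc_succ_top, Finset.Icc_self, Finset.sum_singleton] at e
    rw [e]; push_cast; rw [h1, h2, h3, h4, h5, h6, h7, h8, h9, h10, h11, h12, h13, h14, h15]; decide
  have h17 : (B 17 : ZMod 5) = 0 := by
    have e := hBrec 17 (by norm_num)
    norm_num [Finset.sum_Icc_succ_top, Finset.Icc_self, Finset.sum_singleton] at e
    rw [e]; push_cast; rw [h1, h2, h3, h4, h5, h6, h7, h8, h9, h10, h11, h12, h13, h14, h15, h16]; decide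
  have h18 : (B 18 : ZMod 5) = 0 := by
    have e := hBrec 18 (by norm_num)
    norm_num [Finset.sum_Icc_succ_top, Finset.Icc_self, Finset.sum_singleton] at e
    rw [e]; push_cast; rw [h1, h2, h3, h4, h5, h6, h7, h8, h9, h10, h11, h12, h13, h14, h15, h16, h17]; decide
  have h19 : (B 19 : ZMod 5) = 0 := by
    have e := hBrec 19 (by norm_num)
    norm_num [Finset.sum_Icc_succ_top, Finset.Icc_self, Finset.sum_singleton] at e
    rw [e]; push_cast; rw [h1, h2, h3, h4, h5, h6, h7, h8, h9, h10, h11, h12, h13, h14, h15, h16, h17, h18]; decide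
  have h20 : (B 20 : ZMod 5) = 0 := by
    have e := hBrec 20 (by norm_num)
    norm_num [Finset.sum_Icc_succ_top, Finset.Icc_self, Finset.sum_singleton] at e
    rw [e]; push_cast; rw [h1, h2, h3, h4, h5, h6, h7, h8, h9, h10, h11, h12, h13, h14, h15, h16, h17, h18, h19]; decide
  have h21 : (B 21 : ZMod 5) = 0 := by
    have e := hBrec 21 (by norm_num)
    norm_num [Finset.sum_Icc_succ_top, Finset.Icc_self, Finset.sum_singleton] at e
    rw [e]; push_cast; rw [h1, h2, h3, h4, h5, h6, h7, h8, h9, h10, h11, h12, h13, h14, h15, h16, h17, h18, h19, h20]; decide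
  have h22 : (B 22 : ZMod 5) = 0 := by
    have e := hBrec 22 (by norm_num)
    norm_num [Finset.sum_Icc_succ_top, Finset.Icc_self, Finset.sum_singleton] at e
    rw [e]; push_cast; rw [h1, h2, h3, h4, h5, h6, h7, h8, h9, h10, h11, h12, h13, h14, h15, h16, h17, h18, h19, h20, h21]; decide
  have h23 : (B 23 : ZMod 5) = 0 := by
    have e := hBrec 23 (by norm_num)
    norm_num [Finset.sum_Icc_succ_top, Finset.Icc_self, Finset.sum_singleton] at e
    rw [e]; push_cast; rw [h1, h2, h3, h4, h5, h6, h7, h8, h9, h10, h11, h12, h13, h14, h15, h16, h17, h18, h19, h20, h21, h22]; decide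
  have h24 : (B 24 : ZMod 5) = 0 := by
    have e := hBrec 24 (by norm_num)
    norm_num [Finset.sum_Icc_succ_top, Finset.Icc_self, Finset.sum_singleton] at e
    rw [e]; push_cast; rw [h1, h2, h3, h4, h5, h6, h7, h8, h9, h10, h11, h12, h13, h14, h15, h16, h17, h18, h19, h20, h21, h22, h23]; decide
  have key : ∀ i : ℕ, 13 ≤ i → (B i : ZMod 5) = 0 := by
    intro i
    induction i using Nat.strong_induction_on with
    | _ i ih =>
      intro hi
      rcases le_or_gt i 24 with h24 | h24
      · interval_cases i <;> assumption
      · rw [hBrec i (by omega)]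
        push_cast
        have hf : ((Nat.factorial (2 * i - 2) : ℕ) : ZMod 5) = 0 := by
          rw [ZMod.natCast_eq_zero_iff]
          exact Nat.dvd_factorial (by norm_num) (by omega)
        rw [hf, zero_add]
        apply Finset.sum_eq_zero
        intro m hm
        simp only [Finset.mem_Icc] at hm
        rcases le_or_gt 13 m with hc | hc
        · rw [ih m (by omega) hc]; ring
        · have h2 : 13 ≤ i - m := by omega
          rw [ih (i - m) (by omega) h2]; ring
  intro i hi
  have := key i hi
  rwa [ZMod.natCast_eq_zero_iff] at this
end

section
/- Let f be the formal power series over ℚ defined by f = Σ_{n≥1} (B(n)/(2n-1)!)·Xⁿ. Then f satisfies the identity (1 - X)·f² = 2X(1 - X)·f′ - (1 - X)·f - X in ℚ⟦X⟧, where f′ denotes the formal derivative of f. -/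
open PowerSeries Finset

lemma chocolate2_key (B : ℕ → ℕ)
    (hB1 : B 1 = 1)
    (hBrec : ∀ n : ℕ, 2 ≤ n →
      B n = Nat.factorial (2 * n - 2) +
        ∑ m ∈ Finset.Icc 1 (n - 1),
          Nat.choose (2 * n - 2) (2 * m - 1) * B m * B (n - m))
    (f : PowerSeries ℚ)
    (hf : ∀ n : ℕ, PowerSeries.coeff (R := ℚ) n f =
      if n = 0 then 0 else (B n : ℚ) / (Nat.factorial (2 * n - 1) : ℚ))
    (n : ℕ) (hn : 1 ≤ n) :
    PowerSeries.coeff (R := ℚ) n (f * f) = (2 * n - 1 : ℚ) * PowerSeries.coeff (R := ℚ) n f - 1 := by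
  have hsum : PowerSeries.coeff (R := ℚ) n (f * f)
      = ∑ m ∈ Finset.Icc 1 (n - 1), (PowerSeries.coeff (R := ℚ) m f) * (PowerSeries.coeff (R := ℚ) (n - m) f) := by
    rw [PowerSeries.coeff_mul, Finset.Nat.sum_antidiagonal_eq_sum_range_succ_mk]
    refine (Finset.sum_subset (fun m hm => ?_) (fun m hm hmn => ?_)).symm
    · simp only [Finset.mem_Icc, Finset.mem_range] at *
      omega
    · simp only [Finset.mem_range, Finset.mem_Icc, not_and_or, not_le] at hm hmn
      rcases hmn with h0 | h0
      · have hm0 : m = 0 := by omega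
        rw [hm0, hf 0]
        simp
      · have : n - m = 0 := by omega
        rw [this, hf 0]
        simp
  rcases eq_or_lt_of_le hn with h1 | h2
  · -- n = 1
    subst h1
    simp only [hsum]
    norm_num [hf, hB1]
  · -- n ≥ 2
    have hn2 : 2 ≤ n := h2
    have hfac : ∀ k : ℕ, ((Nat.factorial k : ℚ)) ≠ 0 := by
      intro k; exact_mod_cast Nat.factorial_ne_zero k
    have hterm : ∀ m ∈ Finset.Icc 1 (n - 1),
        (PowerSeries.coeff (R := ℚ) m f) * (PowerSeries.coeff (R := ℚ) (n - m) f)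
          = ((Nat.choose (2 * n - 2) (2 * m - 1) * B m * B (n - m) : ℕ) : ℚ)
            / (Nat.factorial (2 * n - 2) : ℚ) := by
      intro m hm
      simp only [Finset.mem_Icc] at hm
      have hm1 : m ≠ 0 := by omega
      have hnm : n - m ≠ 0 := by omega
      rw [hf m, hf (n - m), if_neg hm1, if_neg hnm]
      have hle : 2 * m - 1 ≤ 2 * n - 2 := by omega
      have hcmf := Nat.choose_mul_factorial_mul_factorial hle
      have hsub : 2 * n - 2 - (2 * m - 1) = 2 * (n - m) - 1 := by omega
      rw [hsub] at hcmf
      have hcmfQ : ((Nat.choose (2 * n - 2) (2 * m - 1) : ℚ))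
          * (Nat.factorial (2 * m - 1) : ℚ) * (Nat.factorial (2 * (n - m) - 1) : ℚ)
          = (Nat.factorial (2 * n - 2) : ℚ) := by exact_mod_cast hcmf
      rw [Nat.cast_mul, Nat.cast_mul, div_mul_div_comm,
        div_eq_div_iff (by positivity) (hfac _)]
      linear_combination (-(B m : ℚ) * (B (n - m) : ℚ)) * hcmfQ
    rw [hsum, Finset.sum_congr rfl hterm, ← Finset.sum_div]
    rw [hf n, if_neg (by omega)]
    have hBn := hBrec n hn2
    have hfacsucc : (2 * n - 1) = (2 * n - 2) + 1 := by omega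
    have hfs : (Nat.factorial (2 * n - 1) : ℚ)
        = (2 * n - 1 : ℚ) * (Nat.factorial (2 * n - 2) : ℚ) := by
      rw [hfacsucc, Nat.factorial_succ]
      push_cast
      have : ((2 * n - 2 : ℕ) : ℚ) = 2 * n - 2 := by push_cast [Nat.cast_sub (by omega : 2 ≤ 2*n)]; ring
      rw [this]; ring
    have hBnQ : ((B n : ℚ)) = (Nat.factorial (2 * n - 2) : ℚ)
        + ((∑ m ∈ Finset.Icc 1 (n - 1),
            Nat.choose (2 * n - 2) (2 * m - 1) * B m * B (n - m) : ℕ) : ℚ) := by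
      exact_mod_cast congrArg (Nat.cast : ℕ → ℚ) hBn
    have h2n1 : (2 * n - 1 : ℚ) ≠ 0 := by
      have : (1:ℚ) ≤ n := by exact_mod_cast hn
      nlinarith
    push_cast at hBnQ ⊢
    rw [hfs, hBnQ]
    field_simp
    ring

/-- Let f = Σ_{n≥1} (B(n)/(2n-1)!)·Xⁿ in ℚ⟦X⟧. Then
(1 - X)·f² = 2X(1 - X)·f′ - (1 - X)·f - X. -/
theorem chocolate2_genfun_riccati (B : ℕ → ℕ)
    (hB1 : B 1 = 1)
    (hBrec : ∀ n : ℕ, 2 ≤ n →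
      B n = Nat.factorial (2 * n - 2) +
        ∑ m ∈ Finset.Icc 1 (n - 1),
          Nat.choose (2 * n - 2) (2 * m - 1) * B m * B (n - m))
    (f : PowerSeries ℚ)
    (hf : ∀ n : ℕ, PowerSeries.coeff (R := ℚ) n f =
      if n = 0 then 0 else (B n : ℚ) / (Nat.factorial (2 * n - 1) : ℚ)) :
    (1 - PowerSeries.X) * f ^ 2 =
      2 * PowerSeries.X * (1 - PowerSeries.X) * PowerSeries.derivative ℚ f
        - (1 - PowerSeries.X) * f - PowerSeries.X := by
  have key := chocolate2_key B hB1 hBrec f hf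
  set d := PowerSeries.derivative ℚ f with hd
  have hrw : (1 - PowerSeries.X) * f ^ 2 -
      (2 * PowerSeries.X * (1 - PowerSeries.X) * d
        - (1 - PowerSeries.X) * f - PowerSeries.X)
      = (f * f - PowerSeries.X * (f * f))
        - ((PowerSeries.X * (d + d) - PowerSeries.X * (PowerSeries.X * (d + d)))
            - (f - PowerSeries.X * f) - PowerSeries.X) := by ring
  rw [← sub_eq_zero, hrw, sub_eq_zero]
  ext n
  have hcd : ∀ k : ℕ, PowerSeries.coeff (R := ℚ) k (d + d)
      = 2 * ((k + 1 : ℚ)) * PowerSeries.coeff (R := ℚ) (k + 1) f := by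
    intro k
    rw [map_add, hd, PowerSeries.coeff_derivative]
    push_cast; ring
  have h0' : PowerSeries.constantCoeff (R := ℚ) f = 0 := by
    rw [← PowerSeries.coeff_zero_eq_constantCoeff, hf 0]; simp
  rcases n with _ | _ | k
  · simp only [map_sub, PowerSeries.coeff_zero_eq_constantCoeff, map_mul, h0',
      PowerSeries.constantCoeff_X, zero_mul, mul_zero, sub_zero, zero_sub, neg_zero, sub_self]
  ·
    simp only [map_sub, PowerSeries.coeff_succ_X_mul, PowerSeries.coeff_zero_X_mul,
      PowerSeries.coeff_one_X]
    rw [key 1 le_rfl, hcd 0, hf 0, hf 1, hB1]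
    norm_num [h0']
  ·
    simp only [map_sub, PowerSeries.coeff_succ_X_mul, PowerSeries.coeff_X]
    rw [key (k + 2) (by omega), key (k + 1) (by omega), hcd (k + 1), hcd k]
    rw [if_neg (by omega)]
    push_cast
    ring
end

section
/- For a prime p, the sequence P(n) is eventually divisible by p (i.e., there exists N such that p divides P(n) for all n ≥ N) if and only if p = 2, or p = 5, or p ≡ 1 (mod 5), or p ≡ 4 (mod 5). -/
/-- The sequence P(n) = Π_{i=1}^{n} ((4i-5)² - 5). -/
def P (n : ℕ) : ℤ := ∏ i ∈ Finset.Icc 1 n, ((4 * (i : ℤ) - 5) ^ 2 - 5)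

lemma key_iff (p : ℕ) (hp : p.Prime) :
    (∃ N : ℕ, ∀ n : ℕ, N ≤ n → (p : ℤ) ∣ P n) ↔
      ∃ i : ℕ, 1 ≤ i ∧ (p : ℤ) ∣ ((4 * (i : ℤ) - 5) ^ 2 - 5) := by
  constructor
  · rintro ⟨N, hN⟩
    have h := hN N le_rfl
    rw [P, (Nat.prime_iff_prime_int.mp hp).dvd_finset_prod_iff] at h
    obtain ⟨i, hi, hdvd⟩ := h
    exact ⟨i, (Finset.mem_Icc.mp hi).1, hdvd⟩
  · rintro ⟨i, hi1, hdvd⟩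
    refine ⟨i, fun n hn => ?_⟩
    exact hdvd.trans (Finset.dvd_prod_of_mem _ (Finset.mem_Icc.mpr ⟨hi1, hn⟩))

lemma exists_iff_isSquare (p : ℕ) (hp : p.Prime) (hp2 : p ≠ 2) :
    (∃ i : ℕ, 1 ≤ i ∧ (p : ℤ) ∣ ((4 * (i : ℤ) - 5) ^ 2 - 5)) ↔
      IsSquare (5 : ZMod p) := by
  haveI : Fact p.Prime := ⟨hp⟩
  constructor
  · rintro ⟨i, _, hdvd⟩
    rw [← ZMod.intCast_zmod_eq_zero_iff_dvd] at hdvd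
    push_cast at hdvd
    exact ⟨4 * (i : ZMod p) - 5, by linear_combination -hdvd⟩
  · rintro ⟨x, hx⟩
    have h4 : (4 : ZMod p) ≠ 0 := by
      have : ((4 : ℕ) : ZMod p) ≠ 0 := by
        rw [Ne, ZMod.natCast_eq_zero_iff]
        intro h
        rcases (Nat.Prime.dvd_of_dvd_pow (n := 2) hp (by norm_num [h] : p ∣ 2 ^ 2)) with h2
        exact hp2 (Nat.le_antisymm (Nat.le_of_dvd two_pos h2) hp.two_le)
      simpa using this
    set j : ℕ := ((4 : ZMod p)⁻¹ * (x + 5)).val with hj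
    refine ⟨j + p, by have := hp.two_le; omega, ?_⟩
    rw [← ZMod.intCast_zmod_eq_zero_iff_dvd]
    push_cast
    have hjv : ((j : ZMod p)) = (4 : ZMod p)⁻¹ * (x + 5) := by
      rw [hj, ZMod.natCast_val, ZMod.cast_id]
    rw [ZMod.natCast_self]
    have h45 : (4 : ZMod p) * ((4 : ZMod p)⁻¹ * (x + 5)) = x + 5 := by
      rw [← mul_assoc, mul_inv_cancel₀ h4, one_mul]
    have : (4 * ((j : ZMod p) + 0) - 5) = x := by rw [hjv, add_zero, h45]; ring
    rw [this, sq, ← hx, sub_self]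

lemma key5 : ∀ k : ℕ, k < 5 → 0 < k → (IsSquare ((k : ℕ) : ZMod 5) ↔ (k = 1 ∨ k = 4)) := by
  decide

/-- For a prime p, the sequence P(n) is eventually divisible by p iff
p = 2, or p = 5, or p ≡ 1 (mod 5), or p ≡ 4 (mod 5). -/
theorem P_eventually_zero_iff (p : ℕ) (hp : p.Prime) :
    (∃ N : ℕ, ∀ n : ℕ, N ≤ n → (p : ℤ) ∣ P n) ↔
      p = 2 ∨ p = 5 ∨ p % 5 = 1 ∨ p % 5 = 4 := by
  rw [key_iff p hp]
  by_cases hp2 : p = 2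
  · subst hp2
    simp only [true_or, iff_true]
    exact ⟨1, le_rfl, by norm_num⟩
  by_cases hp5 : p = 5
  · subst hp5
    simp only [true_or, or_true, iff_true]
    exact ⟨5, by norm_num, by norm_num⟩
  rw [exists_iff_isSquare p hp hp2]
  haveI : Fact p.Prime := ⟨hp⟩
  haveI : Fact (Nat.Prime 5) := ⟨by norm_num⟩
  rw [show ((5 : ZMod p)) = ((5 : ℕ) : ZMod p) by norm_cast,
    ← ZMod.exists_sq_eq_prime_iff_of_mod_four_eq_one (by norm_num) hp2]
  have hcast : ((p : ZMod 5)) = ((p % 5 : ℕ) : ZMod 5) := (ZMod.natCast_mod p 5).symm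
  have h5 : p % 5 ≠ 0 := by
    intro h
    exact hp5 ((Nat.prime_dvd_prime_iff_eq (by norm_num) hp).mp (Nat.dvd_of_mod_eq_zero h)).symm
  have hlt : p % 5 < 5 := Nat.mod_lt p (by norm_num)
  rw [hcast]
  rw [key5 (p % 5) hlt (Nat.pos_of_ne_zero h5)]
  omega
end

section
/- For every integer n > 1: if n ≡ 2 (mod 3) then B(n) ≡ 1 (mod 3), and if n ≡ 0 or 1 (mod 3) then B(n) ≡ 2 (mod 3). In particular, B(n) is never divisible by 3 for n > 1. -/
open Finset

/-- Sum of odd-index binomial coefficients mod 3. -/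
lemma odd_choose_sum (M : ℕ) (hM : 1 ≤ M) :
    ∑ j ∈ (Finset.range (M+1)).filter (fun j => j % 2 = 1), ((M.choose j : ZMod 3))
      = (-1 : ZMod 3) ^ (M+1) := by
  have h21 : (2 : ZMod 3) = -1 := by decide
  have htot : ∑ j ∈ Finset.range (M+1), ((M.choose j : ZMod 3)) = (-1 : ZMod 3) ^ M := by
    have h := Nat.sum_range_choose M
    have h2 : ((∑ j ∈ Finset.range (M+1), M.choose j : ℕ) : ZMod 3) = ((2^M : ℕ) : ZMod 3) := by
      rw [h]
    push_cast at h2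
    rw [h2, h21]
  have halt : ∑ j ∈ Finset.range (M+1), (-1 : ZMod 3) ^ j * (M.choose j : ZMod 3) = 0 := by
    have h := Int.alternating_sum_range_choose_of_ne (n := M) (by omega)
    have h2 : ((∑ i ∈ Finset.range (M+1), (-1:ℤ) ^ i * (M.choose i) : ℤ) : ZMod 3)
        = ((0:ℤ) : ZMod 3) := by rw [h]
    push_cast at h2
    exact h2
  set O := ∑ j ∈ (Finset.range (M+1)).filter (fun j => j % 2 = 1), ((M.choose j : ZMod 3)) with hO
  set E := ∑ j ∈ (Finset.range (M+1)).filter (fun j => ¬ j % 2 = 1), ((M.choose j : ZMod 3)) with hE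
  have hsplit : O + E = (-1 : ZMod 3) ^ M := by
    rw [hO, hE, Finset.sum_filter_add_sum_filter_not, htot]
  have hOd : ∑ j ∈ (Finset.range (M+1)).filter (fun j => j % 2 = 1),
      (-1 : ZMod 3) ^ j * (M.choose j : ZMod 3) = -O := by
    rw [hO, ← Finset.sum_neg_distrib]
    refine Finset.sum_congr rfl fun j hj => ?_
    simp only [Finset.mem_filter] at hj
    rw [(Nat.odd_iff.mpr hj.2).neg_one_pow]
    ring
  have hEv : ∑ j ∈ (Finset.range (M+1)).filter (fun j => ¬ j % 2 = 1),
      (-1 : ZMod 3) ^ j * (M.choose j : ZMod 3) = E := by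
    rw [hE]
    refine Finset.sum_congr rfl fun j hj => ?_
    simp only [Finset.mem_filter] at hj
    rw [(Nat.even_iff.mpr (by omega)).neg_one_pow, one_mul]
  have hEO : -O + E = 0 := by
    rw [← hOd, ← hEv, Finset.sum_filter_add_sum_filter_not, halt]
  have h2O : (2 : ZMod 3) * O = (-1 : ZMod 3) ^ M := by
    have : E = O := by linear_combination hEO
    rw [this] at hsplit; linear_combination hsplit
  have h4 : (2 : ZMod 3) * 2 = 1 := by decide
  have : O = 2 * ((2:ZMod 3) * O) := by rw [← mul_assoc, h4, one_mul]
  rw [this, h2O, h21]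
  ring

/-- The full convolution binomial sum mod 3. -/
lemma A_eval (n : ℕ) (hn : 2 ≤ n) :
    ∑ m ∈ Finset.Icc 1 (n-1), ((Nat.choose (2*n-2) (2*m-1) : ZMod 3)) = -1 := by
  have h : ∑ m ∈ Finset.Icc 1 (n-1), ((Nat.choose (2*n-2) (2*m-1) : ZMod 3))
      = ∑ j ∈ (Finset.range (2*n-2+1)).filter (fun j => j % 2 = 1), (((2*n-2).choose j : ZMod 3)) := by
    refine Finset.sum_nbij' (fun m => 2*m-1) (fun j => (j+1)/2) ?_ ?_ ?_ ?_ ?_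
    · intro m hm
      simp only [Finset.mem_Icc] at hm
      simp only [Finset.mem_filter, Finset.mem_range]
      omega
    · intro j hj
      simp only [Finset.mem_filter, Finset.mem_range] at hj
      simp only [Finset.mem_Icc]
      omega
    · intro m hm
      simp only [Finset.mem_Icc] at hm
      omega
    · intro j hj
      simp only [Finset.mem_filter, Finset.mem_range] at hj
      omega
    · intro m hm
      rfl
  rw [h, odd_choose_sum _ (by omega)]
  have : Odd (2*n-2+1) := by rw [Nat.odd_iff]; omega
  exact this.neg_one_pow

/-- Lucas step: choose N (3j) ≡ choose (N/3) j mod 3. -/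
lemma lucas_step (N k : ℕ) (hk : k % 3 = 0) :
    ((N.choose k : ZMod 3)) = (((N/3).choose (k/3) : ZMod 3)) := by
  haveI : Fact (Nat.Prime 3) := ⟨by norm_num⟩
  have h := Choose.choose_modEq_choose_mod_mul_choose_div_nat (p := 3) (n := N) (k := k)
  rw [hk, Nat.choose_zero_right, one_mul] at h
  exact_mod_cast (ZMod.natCast_eq_natCast_iff _ _ _).mpr h

/-- The sum over m ≡ 2 mod 3 of choose (2n-2) (2m-1), mod 3. -/
lemma U_eval (n : ℕ) (hn : 3 ≤ n) :
    ∑ m ∈ (Finset.Icc 1 (n-1)).filter (fun m => m % 3 = 2),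
        ((Nat.choose (2*n-2) (2*m-1) : ZMod 3)) = (-1 : ZMod 3) ^ ((2*n-2)/3 + 1) := by
  set M := (2*n-2)/3 with hM
  have h : ∑ m ∈ (Finset.Icc 1 (n-1)).filter (fun m => m % 3 = 2),
        ((Nat.choose (2*n-2) (2*m-1) : ZMod 3))
      = ∑ j ∈ (Finset.range (M+1)).filter (fun j => j % 2 = 1), ((M.choose j : ZMod 3)) := by
    refine Finset.sum_nbij' (fun m => (2*m-1)/3) (fun j => (3*j+1)/2) ?_ ?_ ?_ ?_ ?_
    · intro m hm
      simp only [Finset.mem_filter, Finset.mem_Icc] at hm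
      simp only [Finset.mem_filter, Finset.mem_range, hM]
      omega
    · intro j hj
      simp only [Finset.mem_filter, Finset.mem_range, hM] at hj
      simp only [Finset.mem_filter, Finset.mem_Icc]
      omega
    · intro m hm
      simp only [Finset.mem_filter, Finset.mem_Icc] at hm
      omega
    · intro j hj
      simp only [Finset.mem_filter, Finset.mem_range, hM] at hj
      omega
    · intro m hm
      simp only [Finset.mem_filter, Finset.mem_Icc] at hm
      rw [lucas_step _ _ (by omega)]
  rw [h, odd_choose_sum _ (by omega)]

lemma key_sum (n : ℕ) (hn : 3 ≤ n) (c : ℕ → ZMod 3)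
    (hc : ∀ m, 1 ≤ m → m ≤ n-1 → c m = if m % 3 = 2 ∨ m = 1 then 1 else -1) :
    ∑ m ∈ Finset.Icc 1 (n-1), (Nat.choose (2*n-2) (2*m-1) : ZMod 3) * c m * c (n-m)
      = if n % 3 = 2 then 1 else -1 := by
  set χ : ℕ → ZMod 3 := fun m => if m % 3 = 2 ∨ m = 1 then (1:ZMod 3) else 0 with hχ
  set C : ℕ → ZMod 3 := fun m => (Nat.choose (2*n-2) (2*m-1) : ZMod 3) with hC
  -- rewrite c in terms of χ and expand the product
  have hstep : ∀ m ∈ Finset.Icc 1 (n-1),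
      C m * c m * c (n-m)
        = C m * χ m * χ (n-m) + C m * χ m + C m * χ (n-m) + C m := by
    intro m hm
    simp only [Finset.mem_Icc] at hm
    rw [hc m (by omega) (by omega), hc (n-m) (by omega) (by omega)]
    simp only [hχ]
    have h3 : (3:ZMod 3) = 0 := by decide
    split_ifs <;>
      first
      | ring1
      | linear_combination (-(C m)) * h3
  rw [Finset.sum_congr rfl hstep]
  rw [Finset.sum_add_distrib, Finset.sum_add_distrib, Finset.sum_add_distrib]
  -- T4
  have hT4 : ∑ m ∈ Finset.Icc 1 (n-1), C m = -1 := A_eval n (by omega)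
  -- N as element of ZMod 3
  have hNcast : ((2*n-2 : ℕ) : ZMod 3) = (((2*n-2) % 3 : ℕ) : ZMod 3) := by
    rw [ZMod.natCast_mod]
  -- T2
  have hT2 : ∑ m ∈ Finset.Icc 1 (n-1), C m * χ m
      = ((2*n-2 : ℕ) : ZMod 3) + (-1 : ZMod 3) ^ ((2*n-2)/3 + 1) := by
    have h1 : ∑ m ∈ Finset.Icc 1 (n-1), C m * χ m
        = ∑ m ∈ (Finset.Icc 1 (n-1)).filter (fun m => m % 3 = 2 ∨ m = 1), C m := by
      rw [Finset.sum_filter]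
      refine Finset.sum_congr rfl fun m hm => ?_
      simp only [hχ]
      split_ifs <;> ring1
    have h2 : (Finset.Icc 1 (n-1)).filter (fun m => m % 3 = 2 ∨ m = 1)
        = insert 1 ((Finset.Icc 1 (n-1)).filter (fun m => m % 3 = 2)) := by
      ext a
      simp only [Finset.mem_filter, Finset.mem_Icc, Finset.mem_insert]
      omega
    rw [h1, h2, Finset.sum_insert (by simp only [Finset.mem_filter, Finset.mem_Icc]; omega)]
    rw [U_eval n hn]
    congr 1
    simp only [hC]
    norm_num
  -- T3 = T2 by symmetry
  have hT3 : ∑ m ∈ Finset.Icc 1 (n-1), C m * χ (n-m)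
      = ∑ m ∈ Finset.Icc 1 (n-1), C m * χ m := by
    refine Finset.sum_nbij' (fun m => n - m) (fun m => n - m) ?_ ?_ ?_ ?_ ?_
    · intro m hm; simp only [Finset.mem_Icc] at hm ⊢; omega
    · intro m hm; simp only [Finset.mem_Icc] at hm ⊢; omega
    · intro m hm; simp only [Finset.mem_Icc] at hm; omega
    · intro m hm; simp only [Finset.mem_Icc] at hm; omega
    · intro m hm
      simp only [Finset.mem_Icc] at hm
      have hCeq : C m = C (n - m) := by
        simp only [hC]
        rw [show 2*(n-m)-1 = (2*n-2) - (2*m-1) by omega, Nat.choose_symm (by omega)]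
      rw [hCeq]
  -- T1 term as a filtered sum
  have hT1f : ∑ m ∈ Finset.Icc 1 (n-1), C m * χ m * χ (n-m)
      = ∑ m ∈ (Finset.Icc 1 (n-1)).filter
          (fun m => (m % 3 = 2 ∨ m = 1) ∧ ((n-m) % 3 = 2 ∨ n-m = 1)), C m := by
    rw [Finset.sum_filter]
    refine Finset.sum_congr rfl fun m hm => ?_
    simp only [hχ]
    split_ifs <;> first | ring1 | (exfalso; tauto)
  rw [hT1f, hT2, hT3, hT2, hT4]
  -- now case on n % 3
  have h3 : n % 3 = 0 ∨ n % 3 = 1 ∨ n % 3 = 2 := by omega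
  rcases h3 with h | h | h
  · -- filter = {1, n-1}
    have hfil : (Finset.Icc 1 (n-1)).filter
          (fun m => (m % 3 = 2 ∨ m = 1) ∧ ((n-m) % 3 = 2 ∨ n-m = 1)) = {1, n-1} := by
      ext a
      simp only [Finset.mem_filter, Finset.mem_Icc, Finset.mem_insert, Finset.mem_singleton]
      omega
    rw [hfil, Finset.sum_pair (by omega)]
    have hc1 : C 1 = ((2*n-2 : ℕ) : ZMod 3) := by simp only [hC]; norm_num
    have hc2 : C (n-1) = ((2*n-2 : ℕ) : ZMod 3) := by
      simp only [hC]
      rw [show 2*(n-1)-1 = (2*n-2) - 1 by omega, Nat.choose_symm (by omega)]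
      norm_num
    have hNv : ((2*n-2 : ℕ) : ZMod 3) = 1 := by
      rw [hNcast, show (2*n-2) % 3 = 1 by omega]; norm_num
    have hU : (-1 : ZMod 3) ^ ((2*n-2)/3 + 1) = 1 := by
      have : Even ((2*n-2)/3 + 1) := Nat.even_iff.mpr (by omega)
      exact this.neg_one_pow
    rw [hc1, hc2, hNv, hU, if_neg (by omega)]
    decide
  · -- filter = filter (m % 3 = 2)
    have hfil : (Finset.Icc 1 (n-1)).filter
          (fun m => (m % 3 = 2 ∨ m = 1) ∧ ((n-m) % 3 = 2 ∨ n-m = 1))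
        = (Finset.Icc 1 (n-1)).filter (fun m => m % 3 = 2) := by
      ext a
      simp only [Finset.mem_filter, Finset.mem_Icc]
      omega
    rw [hfil]
    have hUval : ∑ m ∈ (Finset.Icc 1 (n-1)).filter (fun m => m % 3 = 2), C m
        = (-1 : ZMod 3) ^ ((2*n-2)/3 + 1) := U_eval n hn
    rw [hUval]
    have hNv : ((2*n-2 : ℕ) : ZMod 3) = 0 := by
      rw [hNcast, show (2*n-2) % 3 = 0 by omega]; norm_num
    have hU : (-1 : ZMod 3) ^ ((2*n-2)/3 + 1) = -1 := by
      have : Odd ((2*n-2)/3 + 1) := Nat.odd_iff.mpr (by omega)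
      exact this.neg_one_pow
    rw [hNv, hU, if_neg (by omega)]
    decide
  · -- filter = ∅
    have hfil : (Finset.Icc 1 (n-1)).filter
          (fun m => (m % 3 = 2 ∨ m = 1) ∧ ((n-m) % 3 = 2 ∨ n-m = 1)) = ∅ := by
      rw [Finset.eq_empty_iff_forall_notMem]
      intro a
      simp only [Finset.mem_filter, Finset.mem_Icc]
      omega
    rw [hfil, Finset.sum_empty]
    have hNv : ((2*n-2 : ℕ) : ZMod 3) = 2 := by
      rw [hNcast, show (2*n-2) % 3 = 2 by omega]; norm_num
    have hU : (-1 : ZMod 3) ^ ((2*n-2)/3 + 1) = -1 := by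
      have : Odd ((2*n-2)/3 + 1) := Nat.odd_iff.mpr (by omega)
      exact this.neg_one_pow
    rw [hNv, hU, if_pos h]
    decide

lemma B_pattern (B : ℕ → ℕ)
    (hB1 : B 1 = 1)
    (hBrec : ∀ n : ℕ, 2 ≤ n →
      B n = Nat.factorial (2 * n - 2) +
        ∑ m ∈ Finset.Icc 1 (n - 1),
          Nat.choose (2 * n - 2) (2 * m - 1) * B m * B (n - m)) :
    ∀ n : ℕ, 2 ≤ n → ((B n : ZMod 3)) = if n % 3 = 2 then 1 else -1 := by
  intro n
  induction n using Nat.strong_induction_on with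
  | _ n ih =>
    intro hn
    by_cases h2 : n = 2
    · subst h2
      have h := hBrec 2 le_rfl
      norm_num [Finset.Icc_self, hB1] at h
      rw [h]
      decide
    · have hn3 : 3 ≤ n := by omega
      have hrec := hBrec n (by omega)
      have hcast : ((B n : ℕ) : ZMod 3)
          = ((Nat.factorial (2*n-2) : ℕ) : ZMod 3)
            + ∑ m ∈ Finset.Icc 1 (n-1),
                ((Nat.choose (2*n-2) (2*m-1) : ZMod 3)) * (B m : ZMod 3) * (B (n-m) : ZMod 3) := by
        rw [hrec]
        push_cast
        ring
      have hfac : ((Nat.factorial (2*n-2) : ℕ) : ZMod 3) = 0 := by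
        rw [ZMod.natCast_eq_zero_iff]
        exact Nat.dvd_factorial (by norm_num) (by omega)
      rw [hcast, hfac, zero_add]
      apply key_sum n hn3
      intro m hm1 hm2
      by_cases hm : m = 1
      · subst hm
        rw [hB1]
        norm_num
      · have := ih m (by omega) (by omega)
        rw [this]
        by_cases hm3 : m % 3 = 2
        · rw [if_pos hm3, if_pos (Or.inl hm3)]
        · rw [if_neg hm3, if_neg (by omega : ¬(m % 3 = 2 ∨ m = 1))]


/-- For every integer n > 1: if n ≡ 2 (mod 3) then B(n) ≡ 1 (mod 3), and
if n ≡ 0 or 1 (mod 3) then B(n) ≡ 2 (mod 3). In particular, 3 never divides B(n) for n > 1. -/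
theorem chocolate2_mod_three (B : ℕ → ℕ)
    (hB1 : B 1 = 1)
    (hBrec : ∀ n : ℕ, 2 ≤ n →
      B n = Nat.factorial (2 * n - 2) +
        ∑ m ∈ Finset.Icc 1 (n - 1),
          Nat.choose (2 * n - 2) (2 * m - 1) * B m * B (n - m)) :
    ∀ n : ℕ, 1 < n →
      (n % 3 = 2 → B n % 3 = 1) ∧
      (n % 3 = 0 ∨ n % 3 = 1 → B n % 3 = 2) ∧
      ¬ (3 ∣ B n) := by
  intro n hn
  have hp := B_pattern B hB1 hBrec n (by omega)
  have hm : ((B n % 3 : ℕ) : ZMod 3) = if n % 3 = 2 then 1 else -1 := by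
    rw [ZMod.natCast_mod, hp]
  have h3 : B n % 3 = 0 ∨ B n % 3 = 1 ∨ B n % 3 = 2 := by omega
  have hval : B n % 3 = if n % 3 = 2 then 1 else 2 := by
    by_cases hn2 : n % 3 = 2
    · rw [if_pos hn2] at hm ⊢
      rcases h3 with h | h | h <;> rw [h] at hm <;> first | exact h | (exfalso; revert hm; decide)
    · rw [if_neg hn2] at hm ⊢
      rcases h3 with h | h | h <;> rw [h] at hm <;> first | exact h | (exfalso; revert hm; decide)
  refine ⟨fun h => by rw [hval, if_pos h], fun h => by rw [hval, if_neg (by omega)], ?_⟩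
  by_cases hn2 : n % 3 = 2 <;> simp [hn2] at hval <;> omega
end

section
/- For every positive integer n with n ≡ 2 (mod 6) and n > 2, the sum of the binomial coefficients C(n,i) over all indices i with 0 ≤ i ≤ n and i ≡ 1 (mod 6) is congruent to 1 modulo 3; that is, C(n,1) + C(n,7) + ⋯ + C(n,n-1) ≡ 1 (mod 3). -/
open Finset

private def g (n r : ℕ) : ZMod 3 :=
  ∑ i ∈ Finset.range (n + 1), (if i % 6 = r then (Nat.choose n i : ZMod 3) else 0)

private lemma g_step (n r : ℕ) (hr : r < 6) :
    g (n + 1) r = g n r + g n ((r + 5) % 6) := by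
  unfold g
  rw [Finset.sum_range_succ' (fun i => if i % 6 = r then (Nat.choose (n+1) i : ZMod 3) else 0)]
  have hsplit : ∀ i, (if (i+1) % 6 = r then (Nat.choose (n+1) (i+1) : ZMod 3) else 0)
      = (if (i+1) % 6 = r then (Nat.choose n i : ZMod 3) else 0)
        + (if (i+1) % 6 = r then (Nat.choose n (i+1) : ZMod 3) else 0) := by
    intro i
    rw [Nat.choose_succ_succ]
    split <;> push_cast <;> ring
  rw [Finset.sum_congr rfl (fun i _ => hsplit i), Finset.sum_add_distrib]
  have h1 : ∀ i, (if (i+1) % 6 = r then (Nat.choose n i : ZMod 3) else 0)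
      = (if i % 6 = (r + 5) % 6 then (Nat.choose n i : ZMod 3) else 0) := by
    intro i
    have : (i+1) % 6 = r ↔ i % 6 = (r + 5) % 6 := by omega
    simp [this]
  rw [Finset.sum_congr rfl (fun i _ => h1 i)]
  have h2 : (∑ i ∈ Finset.range (n+1),
        (if (i+1) % 6 = r then (Nat.choose n (i+1) : ZMod 3) else 0))
      + (if 0 % 6 = r then (Nat.choose (n+1) 0 : ZMod 3) else 0)
      = ∑ i ∈ Finset.range (n+1), (if i % 6 = r then (Nat.choose n i : ZMod 3) else 0) := by
    rw [show (if 0 % 6 = r then (Nat.choose (n+1) 0 : ZMod 3) else 0)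
        = (if 0 % 6 = r then (Nat.choose n 0 : ZMod 3) else 0) by simp]
    rw [← Finset.sum_range_succ' (fun i => if i % 6 = r then (Nat.choose n i : ZMod 3) else 0)]
    rw [Finset.sum_range_succ]
    simp [Nat.choose_succ_self]
  linear_combination h2

private lemma g_vec (m : ℕ) :
    g (8 + 6 * m) 0 = 2 ∧ g (8 + 6 * m) 1 = 1 ∧ g (8 + 6 * m) 2 = 2 ∧
    g (8 + 6 * m) 3 = 2 ∧ g (8 + 6 * m) 4 = 1 ∧ g (8 + 6 * m) 5 = 2 := by
  induction m with
  | zero =>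
      refine ⟨?_, ?_, ?_, ?_, ?_, ?_⟩ <;>
        · simp only [g, Finset.sum_range_succ, Finset.sum_range_zero]
          norm_num [Nat.choose]
          decide
  | succ k ih =>
      obtain ⟨h0, h1, h2, h3, h4, h5⟩ := ih
      have e : 8 + 6 * (k + 1) = (8 + 6 * k) + 1 + 1 + 1 + 1 + 1 + 1 := by ring
      rw [e]
      refine ⟨?_, ?_, ?_, ?_, ?_, ?_⟩ <;>
        · rw [g_step _ _ (by norm_num)]
          repeat rw [g_step _ _ (by norm_num)]
          norm_num [h0, h1, h2, h3, h4, h5]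
          decide

/-- For every positive integer n with n ≡ 2 (mod 6) and n > 2, the sum of
C(n,i) over 0 ≤ i ≤ n with i ≡ 1 (mod 6) is ≡ 1 (mod 3). -/
theorem binom_sum_one_mod_six (n : ℕ) (hn : n % 6 = 2) (hn2 : 2 < n) :
    (∑ i ∈ (Finset.range (n + 1)).filter (fun i => i % 6 = 1), Nat.choose n i) % 3 = 1 := by
  obtain ⟨m, rfl⟩ : ∃ m, n = 8 + 6 * m := ⟨(n - 8) / 6, by omega⟩
  have hg := (g_vec m).2.1
  have hcast : ((∑ i ∈ (Finset.range (8 + 6 * m + 1)).filter (fun i => i % 6 = 1),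
      Nat.choose (8 + 6 * m) i : ℕ) : ZMod 3) = 1 := by
    push_cast
    rw [Finset.sum_filter]
    exact hg
  have hcast' : ((∑ i ∈ (Finset.range (8 + 6 * m + 1)).filter (fun i => i % 6 = 1),
      Nat.choose (8 + 6 * m) i : ℕ) : ZMod 3) = ((1 : ℕ) : ZMod 3) := by
    exact_mod_cast hcast
  have := (ZMod.natCast_eq_natCast_iff _ _ _).mp hcast'
  simpa [Nat.ModEq] using this
end

section
/- For every positive integer n with n ≡ 4 (mod 6) and n > 4, the sum of the binomial coefficients C(n,i) over all indices i with 0 ≤ i ≤ n and i ≡ 5 (mod 6) is congruent to 0 modulo 3; that is, C(n,5) + C(n,11) + ⋯ + C(n,n-5) ≡ 0 (mod 3). -/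
lemma choose_mod_three_zero (n i : ℕ) (hn : n % 3 = 1) (hi : i % 3 = 2) :
    Nat.choose n i % 3 = 0 := by
  have h := @Choose.choose_modEq_choose_mod_mul_choose_div_nat n i 3 ⟨by norm_num⟩
  unfold Nat.ModEq at h
  rw [h, hn, hi]
  simp [Nat.choose_eq_zero_of_lt, Nat.mul_mod]

/-- For every positive integer n with n ≡ 4 (mod 6) and n > 4, the sum of
C(n,i) over 0 ≤ i ≤ n with i ≡ 5 (mod 6) is ≡ 0 (mod 3). -/
theorem binom_sum_five_mod_six (n : ℕ) (hn : n % 6 = 4) (hn4 : 4 < n) :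
    (∑ i ∈ (Finset.range (n + 1)).filter (fun i => i % 6 = 5), Nat.choose n i) % 3 = 0 := by
  rw [Finset.sum_nat_mod]
  have hn3 : n % 3 = 1 := by omega
  rw [Finset.sum_congr rfl (fun i hi => by
    simp only [Finset.mem_filter] at hi
    exact choose_mod_three_zero n i hn3 (by omega))]
  simp
end

section
/- Let p be a prime such that p ≠ 2, p ≠ 5, and p is not congruent to 1 or 4 modulo 5. Then P(n + p(p-1)) ≡ P(n) (mod p) for every positive integer n. -/
lemma not_isSquare_two_mod_five : ¬ IsSquare (2 : ZMod 5) := by decide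

lemma not_isSquare_three_mod_five : ¬ IsSquare (3 : ZMod 5) := by decide

/-- If p is a prime with p ≠ 2, p ≠ 5, and p not congruent to 1 or 4 mod 5,
then P(n + p(p-1)) ≡ P(n) (mod p) for every positive integer n. -/
theorem P_period_mod_prime (p : ℕ) (hp : p.Prime) (h2 : p ≠ 2) (h5 : p ≠ 5)
    (h1mod : p % 5 ≠ 1) (h4mod : p % 5 ≠ 4) :
    ∀ n : ℕ, 1 ≤ n → P (n + p * (p - 1)) ≡ P n [ZMOD (p : ℤ)] := by
  haveI : Fact p.Prime := ⟨hp⟩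
  haveI : Fact (Nat.Prime 5) := ⟨by norm_num⟩
  -- 5 is not a square mod p
  have hns : ¬ IsSquare (5 : ZMod p) := by
    have h := (ZMod.exists_sq_eq_prime_iff_of_mod_four_eq_one (p := 5) (q := p)
      (by norm_num) h2)
    intro hsq
    have hsq' : IsSquare ((p : ℕ) : ZMod 5) := h.mpr (by simpa using hsq)
    have hmod : ((p : ℕ) : ZMod 5) = ((p % 5 : ℕ) : ZMod 5) := by
      rw [ZMod.natCast_mod]
    have hne0 : p % 5 ≠ 0 := by
      intro h0
      exact h5 ((Nat.prime_dvd_prime_iff_eq (by norm_num) hp).mp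
        (Nat.dvd_of_mod_eq_zero h0)).symm
    have hlt : p % 5 < 5 := Nat.mod_lt _ (by norm_num)
    rw [hmod] at hsq'
    interval_cases h : (p % 5)
    · exact hne0 rfl
    · exact h1mod rfl
    · exact not_isSquare_two_mod_five (by exact_mod_cast hsq')
    · exact not_isSquare_three_mod_five (by exact_mod_cast hsq')
    · exact h4mod rfl
  set g : ZMod p → ZMod p := fun x => (4 * x - 5) ^ 2 - 5 with hg
  set c : ZMod p := ∏ x : ZMod p, g x with hc
  have hgne : ∀ x : ZMod p, g x ≠ 0 := by
    intro x hx
    apply hns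
    exact ⟨4 * x - 5, by rw [← sq]; linear_combination -hx⟩
  have hcne : c ≠ 0 := Finset.prod_ne_zero_iff.mpr fun x _ => hgne x
  -- product over any window of length p
  have hwindow : ∀ a : ℕ,
      ((∏ i ∈ Finset.Ioc a (a + p), ((4 * (i : ℤ) - 5) ^ 2 - 5) : ℤ) : ZMod p) = c := by
    intro a
    have hinj : Set.InjOn (Nat.cast : ℕ → ZMod p) (Finset.Ioc a (a + p)) := by
      intro i hi j hj hij
      simp only [Finset.coe_Ioc, Set.mem_Ioc] at hi hj
      rw [ZMod.natCast_eq_natCast_iff] at hij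
      rcases le_total i j with h | h
      · have := (Nat.modEq_iff_dvd' h).mp hij
        have := Nat.eq_zero_of_dvd_of_lt this (by omega)
        omega
      · have := (Nat.modEq_iff_dvd' h).mp hij.symm
        have := Nat.eq_zero_of_dvd_of_lt this (by omega)
        omega
    have himg : (Finset.Ioc a (a + p)).image (Nat.cast : ℕ → ZMod p) = Finset.univ := by
      apply Finset.eq_univ_of_card
      rw [Finset.card_image_of_injOn hinj, Nat.card_Ioc, ZMod.card p]
      omega
    push_cast
    rw [hc, ← himg, Finset.prod_image (fun i hi j hj => hinj hi hj)]
  -- one step of period p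
  have hstep : ∀ n : ℕ, ((P (n + p) : ℤ) : ZMod p) = c * ((P n : ℤ) : ZMod p) := by
    intro n
    have h1 : Finset.Icc 1 (n + p) = Finset.Ioc 0 (n + p) := by
      rw [← Finset.Icc_add_one_left_eq_Ioc]; rfl
    have h2 : Finset.Icc 1 n = Finset.Ioc 0 n := by
      rw [← Finset.Icc_add_one_left_eq_Ioc]; rfl
    have hsplit := Finset.prod_Ioc_consecutive (fun i : ℕ => ((4 * (i : ℤ) - 5) ^ 2 - 5))
      (Nat.zero_le n) (Nat.le_add_right n p)
    rw [P, P, h1, h2, ← hsplit]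
    push_cast
    rw [mul_comm]
    congr 1
    have := hwindow n
    push_cast at this
    exact this
  -- iterate
  have hiter : ∀ k n : ℕ, ((P (n + k * p) : ℤ) : ZMod p) = c ^ k * ((P n : ℤ) : ZMod p) := by
    intro k
    induction k with
    | zero => intro n; simp
    | succ k ih =>
      intro n
      have : n + (k + 1) * p = (n + k * p) + p := by ring
      rw [this, hstep, ih, pow_succ]
      ring
  intro n hn
  have key : ((P (n + p * (p - 1)) : ℤ) : ZMod p) = ((P n : ℤ) : ZMod p) := by
    rw [mul_comm p (p - 1), hiter (p - 1) n, ZMod.pow_card_sub_one_eq_one hcne, one_mul]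
  exact (ZMod.intCast_eq_intCast_iff _ _ _).mp key
end
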